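/- arXiv:2111.02483 — 9 statements merged into one kernel-verified Lean document; each statement's English description precedes it below -/
import Mathlib

section
/- Let G be a graph and let q₁, q₂ be cliques (maximal complete subgraphs) of G such that every edge {x,y} with both endpoints in q₁ ∪ q₂ has at least one endpoint in q₁ ∩ q₂. Then every complete subgraph c with c ⊆ q₁ ∪ q₂ satisfies c ⊆ q₁ or c ⊆ q₂. -/
universe u

variable {V : Type u}

/-- A clique of `G` in the sense of the paper: a maximal complete subgraph,
represented as a finset of vertices. -/
def MaxClique (G : SimpleGraph V) (s : Finset V) : Prop :=
  G.IsClique (s : Set V) ∧ ∀ t : Finset V, G.IsClique (t : Set V) → s ⊆ t → s = t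

/-- A pairwise-intersecting family of finsets. -/
def PairwiseIntersecting (Q : Set (Finset V)) : Prop :=
  ∀ q ∈ Q, ∀ r ∈ Q, ∃ v, v ∈ q ∧ v ∈ r

/-- A clique of the clique graph `K(G)`: a maximal pairwise-intersecting family of
cliques of `G`. -/
def IsCliqueOfCliques (G : SimpleGraph V) (Q : Set (Finset V)) : Prop :=
  (∀ q ∈ Q, MaxClique G q) ∧ PairwiseIntersecting Q ∧
    ∀ Q' : Set (Finset V), Q ⊆ Q' → (∀ q ∈ Q', MaxClique G q) →
      PairwiseIntersecting Q' → Q' = Q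

/-- A necktie: a clique of `K(G)` with empty total intersection. -/
def IsNecktie (G : SimpleGraph V) (Q : Set (Finset V)) : Prop :=
  IsCliqueOfCliques G Q ∧ ¬ ∃ v, ∀ q ∈ Q, v ∈ q

/-- The star of a vertex: the family of cliques of `G` containing it. -/
def starOf (G : SimpleGraph V) (x : V) : Set (Finset V) :=
  {q | MaxClique G q ∧ x ∈ q}

/-- A vertex is normal when its star is a clique of `K(G)`. -/
def IsNormal (G : SimpleGraph V) (x : V) : Prop :=
  IsCliqueOfCliques G (starOf G x)

/-- A triangle: a complete subgraph with three vertices. -/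
def IsTriangle (G : SimpleGraph V) (T : Finset V) : Prop :=
  G.IsClique (T : Set V) ∧ T.card = 3

/-- An inner triangle: a triangle that is a clique and such that each of its edges
lies in a triangle different from `T`. -/
def IsInnerTriangle [DecidableEq V] (G : SimpleGraph V) (T : Finset V) : Prop :=
  MaxClique G T ∧ T.card = 3 ∧
    ∀ x ∈ T, ∀ y ∈ T, x ≠ y →
      ∃ T' : Finset V, IsTriangle G T' ∧ T' ≠ T ∧ T ∩ T' = ({x, y} : Finset V)

/-- `Q_T`: the family of cliques meeting the triangle `T` in at least two vertices. -/
def QT [DecidableEq V] (G : SimpleGraph V) (T : Finset V) : Set (Finset V) :=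
  {q | MaxClique G q ∧ 2 ≤ (q ∩ T).card}

/-- Adjacency between two vertices of `K²(G)` (i.e. cliques of `K(G)`):
they are distinct and intersect. -/
def Adj2 (A B : Set (Finset V)) : Prop :=
  A ≠ B ∧ ∃ q, q ∈ A ∧ q ∈ B

/-- `s` induces a 4-cycle in `G`. -/
def InducesC4 [DecidableEq V] (G : SimpleGraph V) (s : Finset V) : Prop :=
  ∃ a b c d : V, a ≠ b ∧ a ≠ c ∧ a ≠ d ∧ b ≠ c ∧ b ≠ d ∧ c ≠ d ∧
    s = ({a, b, c, d} : Finset V) ∧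
    G.Adj a b ∧ G.Adj b c ∧ G.Adj c d ∧ G.Adj d a ∧ ¬ G.Adj a c ∧ ¬ G.Adj b d

/-- The octahedron, i.e. the complete tripartite graph `K_{2,2,2}`. -/
def octahedron : SimpleGraph (Fin 3 × Fin 2) where
  Adj a b := a.1 ≠ b.1
  symm := ⟨fun _ _ h => h.symm⟩
  loopless := ⟨fun _ h => h rfl⟩

/-- The clique graph `K(G)`: the intersection graph of the cliques of `G`. -/
def cliqueGraph (G : SimpleGraph V) : SimpleGraph {q : Finset V // MaxClique G q} where
  Adj q r := q ≠ r ∧ ∃ v, v ∈ q.1 ∧ v ∈ r.1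
  symm := ⟨fun _ _ h => ⟨h.1.symm, h.2.imp fun _ hv => ⟨hv.2, hv.1⟩⟩⟩
  loopless := ⟨fun _ h => h.1 rfl⟩

/-- A graph is clique-Helly when its family of cliques has the Helly property. -/
def CliqueHelly {W : Type*} (H : SimpleGraph W) : Prop :=
  ∀ F : Set (Finset W), F.Nonempty → (∀ q ∈ F, MaxClique H q) →
    PairwiseIntersecting F → ∃ v, ∀ q ∈ F, v ∈ q

/-- Hereditary clique-Helly: every induced subgraph is clique-Helly. -/
def HereditaryCliqueHelly {W : Type*} (H : SimpleGraph W) : Prop :=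
  ∀ s : Set W, CliqueHelly (SimpleGraph.induce s H)

/-- A finite graph packaged with its vertex type, to allow iterating `K`. -/
structure FGraph where
  V : Type u
  fin : Fintype V
  G : SimpleGraph V

/-- The clique graph operator on packaged finite graphs. -/
noncomputable def FGraph.K (F : FGraph) : FGraph where
  V := {q : Finset F.V // MaxClique F.G q}
  fin := by
    haveI := F.fin
    classical
    exact Subtype.fintype _
  G := cliqueGraph F.G

/-- Iterated clique graphs: `iterK F n` packages `Kⁿ(G)`. -/
noncomputable def iterK (F : FGraph) : ℕ → FGraph
  | 0 => F
  | n + 1 => (iterK F n).K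

theorem stmt0 {V : Type u} [DecidableEq V] (G : SimpleGraph V)
    (q1 q2 : Finset V) (h1 : MaxClique G q1) (h2 : MaxClique G q2)
    (hedge : ∀ x y : V, G.Adj x y → x ∈ q1 ∪ q2 → y ∈ q1 ∪ q2 →
      x ∈ q1 ∩ q2 ∨ y ∈ q1 ∩ q2)
    (c : Finset V) (hc : G.IsClique (c : Set V)) (hsub : c ⊆ q1 ∪ q2) :
    c ⊆ q1 ∨ c ⊆ q2 := by
  by_contra h
  push_neg at h
  obtain ⟨hn1, hn2⟩ := h
  obtain ⟨x, hxc, hx1⟩ := Finset.not_subset.mp hn1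
  obtain ⟨y, hyc, hy2⟩ := Finset.not_subset.mp hn2
  have hxu := hsub hxc
  have hyu := hsub hyc
  rcases Finset.mem_union.mp hxu with hx | hx2
  · exact hx1 hx
  rcases Finset.mem_union.mp hyu with hy1 | hy
  · have hxy : x ≠ y := by rintro rfl; exact hx1 hy1
    have hadj : G.Adj x y := hc hxc hyc hxy
    rcases hedge x y hadj hxu hyu with h | h
    · exact hx1 (Finset.mem_inter.mp h).1
    · exact hy2 (Finset.mem_inter.mp h).2
  · exact hy2 hy
end

section
/- If G is a graph with maximum degree at most 4, then every clique of G that belongs to a necktie of G is a triangle (has exactly 3 vertices). -/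
universe u

variable {V : Type u}

theorem stmt3 {V : Type u} [Fintype V] [DecidableEq V] (G : SimpleGraph V)
    [DecidableRel G.Adj] (hdeg : ∀ v, G.degree v ≤ 4)
    (Q : Set (Finset V)) (hQ : IsNecktie G Q) :
    ∀ q ∈ Q, q.card = 3 := by
  classical
  obtain ⟨⟨hmax, hpi, _hmaxl⟩, hne⟩ := hQ
  intro q hq
  -- every clique minus a vertex sits in the vertex's neighborhood
  have hsubN : ∀ s : Finset V, G.IsClique (s : Set V) → ∀ v ∈ s,
      s.erase v ⊆ G.neighborFinset v := by
    intro s hs v hv w hw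
    rw [Finset.mem_erase] at hw
    rw [SimpleGraph.mem_neighborFinset]
    exact hs (Finset.mem_coe.mpr hv) (Finset.mem_coe.mpr hw.2) (Ne.symm hw.1)
  have hcard5 : ∀ s : Finset V, G.IsClique (s : Set V) → ∀ v ∈ s, s.card ≤ 5 := by
    intro s hs v hv
    have h := Finset.card_le_card (hsubN s hs v hv)
    rw [Finset.card_erase_of_mem hv, SimpleGraph.card_neighborFinset_eq_degree] at h
    have := hdeg v
    omega
  have hqcl : G.IsClique (q : Set V) := (hmax q hq).1
  obtain ⟨v0, hv0q, -⟩ := hpi q hq q hq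
  have h1 : 1 ≤ q.card := Finset.card_pos.mpr ⟨v0, hv0q⟩
  have h5 : q.card ≤ 5 := hcard5 q hqcl v0 hv0q
  have hmiss : ∀ x : V, ∃ r ∈ Q, x ∉ r := by
    intro x
    by_contra h
    push_neg at h
    exact hne ⟨x, h⟩
  have hcases : q.card = 1 ∨ q.card = 2 ∨ q.card = 3 ∨ q.card = 4 ∨ q.card = 5 := by omega
  rcases hcases with h | h | h | h | h
  · -- card 1 : the unique vertex is in every member
    exfalso
    obtain ⟨v, hv⟩ := Finset.card_eq_one.mp h
    refine hne ⟨v, fun r hr => ?_⟩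
    obtain ⟨u, huq, hur⟩ := hpi q hq r hr
    rw [hv, Finset.mem_singleton] at huq
    rwa [huq] at hur
  · -- card 2 : extend the edge to a triangle, contradicting maximality
    exfalso
    obtain ⟨u, v, huv, hquv⟩ := Finset.card_eq_two.mp h
    obtain ⟨r1, hr1Q, hur1⟩ := hmiss u
    obtain ⟨r2, hr2Q, hvr2⟩ := hmiss v
    obtain ⟨w, hwr1, hwr2⟩ := hpi r1 hr1Q r2 hr2Q
    have hvr1 : v ∈ r1 := by
      obtain ⟨x, hxq, hxr1⟩ := hpi q hq r1 hr1Q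
      rw [hquv, Finset.mem_insert, Finset.mem_singleton] at hxq
      rcases hxq with rfl | rfl
      · exact absurd hxr1 hur1
      · exact hxr1
    have hur2 : u ∈ r2 := by
      obtain ⟨x, hxq, hxr2⟩ := hpi q hq r2 hr2Q
      rw [hquv, Finset.mem_insert, Finset.mem_singleton] at hxq
      rcases hxq with rfl | rfl
      · exact hxr2
      · exact absurd hxr2 hvr2
    have hwu : w ≠ u := fun e => hur1 (e ▸ hwr1)
    have hwv : w ≠ v := fun e => hvr2 (e ▸ hwr2)
    have hawv : G.Adj w v := (hmax r1 hr1Q).1 (Finset.mem_coe.mpr hwr1) (Finset.mem_coe.mpr hvr1) hwv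
    have hawu : G.Adj w u := (hmax r2 hr2Q).1 (Finset.mem_coe.mpr hwr2) (Finset.mem_coe.mpr hur2) hwu
    have hwq : w ∉ q := by
      rw [hquv, Finset.mem_insert, Finset.mem_singleton]
      push_neg
      exact ⟨hwu, hwv⟩
    have hclt : G.IsClique ((insert w q : Finset V) : Set V) := by
      rw [Finset.coe_insert]
      refine hqcl.insert ?_
      intro b hb hbw
      rw [Finset.mem_coe, hquv, Finset.mem_insert, Finset.mem_singleton] at hb
      rcases hb with rfl | rfl
      · exact hawu
      · exact hawv
    have := (hmax q hq).2 (insert w q) hclt (Finset.subset_insert _ _)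
    exact hwq (this ▸ Finset.mem_insert_self w q)
  · exact h
  · -- card 4
    exfalso
    -- each vertex of q has at most one neighbor outside q
    have honb : ∀ x ∈ q, ∀ y z : V, y ∉ q → z ∉ q → G.Adj x y → G.Adj x z → y = z := by
      intro x hx y z hy hz hxy hxz
      by_contra hyz
      have hsub : insert y (insert z (q.erase x)) ⊆ G.neighborFinset x := by
        intro a ha
        rw [Finset.mem_insert, Finset.mem_insert] at ha
        rcases ha with rfl | rfl | ha
        · exact (SimpleGraph.mem_neighborFinset _ _ _).mpr hxy
        · exact (SimpleGraph.mem_neighborFinset _ _ _).mpr hxz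
        · exact hsubN q hqcl x hx ha
      have hye : y ∉ insert z (q.erase x) := by
        rw [Finset.mem_insert, Finset.mem_erase]
        push_neg
        exact ⟨hyz, fun _ => hy⟩
      have hze : z ∉ q.erase x := fun hz' => hz (Finset.mem_of_mem_erase hz')
      have hc := Finset.card_le_card hsub
      rw [Finset.card_insert_of_notMem hye, Finset.card_insert_of_notMem hze,
        Finset.card_erase_of_mem hx, SimpleGraph.card_neighborFinset_eq_degree, h] at hc
      have := hdeg x
      omega
    -- structure of other members of Q
    have hstruct : ∀ r ∈ Q, r ≠ q → ∃ w, w ∈ r ∧ w ∉ q ∧ ∀ u ∈ r, u ≠ w → u ∈ q := by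
      intro r hr hrne
      obtain ⟨x, hxr, hxq⟩ := hpi r hr q hq
      have hout : ∃ w ∈ r, w ∉ q := by
        by_contra hc
        push_neg at hc
        exact hrne ((hmax r hr).2 q hqcl hc)
      obtain ⟨w, hwr, hwq⟩ := hout
      refine ⟨w, hwr, hwq, fun u hur huw => ?_⟩
      by_contra huq
      have hxu : x ≠ u := fun e => huq (e ▸ hxq)
      have hxw : x ≠ w := fun e => hwq (e ▸ hxq)
      exact huw (honb x hxq u w huq hwq
        ((hmax r hr).1 (Finset.mem_coe.mpr hxr) (Finset.mem_coe.mpr hur) hxu)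
        ((hmax r hr).1 (Finset.mem_coe.mpr hxr) (Finset.mem_coe.mpr hwr) hxw))
    -- there is a member different from q
    have hex : ∃ r0 ∈ Q, r0 ≠ q := by
      by_contra hc
      push_neg at hc
      exact hne ⟨v0, fun r hr => (hc r hr) ▸ hv0q⟩
    obtain ⟨r0, hr0Q, hr0ne⟩ := hex
    obtain ⟨w, hwr0, hwq, hr0sub⟩ := hstruct r0 hr0Q hr0ne
    obtain ⟨x0, hx0r0, hx0q⟩ := hpi r0 hr0Q q hq
    -- all other members contain w and their q-part is adjacent to w
    have hkey : ∀ r ∈ Q, r ≠ q → w ∈ r ∧ ∀ u ∈ r, u ≠ w → u ∈ q := by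
      intro r hr hrne
      obtain ⟨wr, hwrr, hwrq, hrsub⟩ := hstruct r hr hrne
      have hwrw : wr = w := by
        obtain ⟨u, hur, hur0⟩ := hpi r hr r0 hr0Q
        by_cases hu : u ∈ q
        · have huwr : u ≠ wr := fun e => hwrq (e ▸ hu)
          have huw : u ≠ w := fun e => hwq (e ▸ hu)
          exact honb u hu wr w hwrq hwq
            ((hmax r hr).1 (Finset.mem_coe.mpr hur) (Finset.mem_coe.mpr hwrr) huwr)
            ((hmax r0 hr0Q).1 (Finset.mem_coe.mpr hur0) (Finset.mem_coe.mpr hwr0) huw)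
        · have h1 : u = wr := by
            by_contra hc; exact hu (hrsub u hur hc)
          have h2 : u = w := by
            by_contra hc; exact hu (hr0sub u hur0 hc)
          rw [← h1, h2]
      exact ⟨hwrw ▸ hwrr, hwrw ▸ hrsub⟩
    -- the clique insert w (q.filter (adjacent to w)) absorbs all members ≠ q
    set T : Finset V := q.filter (fun y => G.Adj y w) with hT
    have hclT : G.IsClique ((insert w T : Finset V) : Set V) := by
      rw [Finset.coe_insert]
      refine (hqcl.subset ?_).insert ?_
      · rw [Finset.coe_subset]; exact Finset.filter_subset _ _
      · intro b hb _
        rw [Finset.mem_coe, hT, Finset.mem_filter] at hb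
        exact hb.2.symm
    have hrt : ∀ r ∈ Q, r ≠ q → r = insert w T := by
      intro r hr hrne
      obtain ⟨hwr, hrsub⟩ := hkey r hr hrne
      refine (hmax r hr).2 _ hclT ?_
      intro u hur
      by_cases huw : u = w
      · exact huw ▸ Finset.mem_insert_self w T
      · refine Finset.mem_insert_of_mem ?_
        rw [hT, Finset.mem_filter]
        exact ⟨hrsub u hur huw,
          (hmax r hr).1 (Finset.mem_coe.mpr hur) (Finset.mem_coe.mpr hwr) huw⟩
    refine hne ⟨x0, fun r hr => ?_⟩
    by_cases hrne : r = q
    · exact hrne ▸ hx0q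
    · rw [hrt r hr hrne, ← hrt r0 hr0Q hr0ne]
      exact hx0r0
  · -- card 5 : q is the only member
    exfalso
    have hnbr : ∀ u ∈ q, G.neighborFinset u = q.erase u := by
      intro u hu
      refine (Finset.eq_of_subset_of_card_le (hsubN q hqcl u hu) ?_).symm
      rw [Finset.card_erase_of_mem hu, SimpleGraph.card_neighborFinset_eq_degree, h]
      exact hdeg u
    refine hne ⟨v0, fun r hr => ?_⟩
    obtain ⟨u, hur, huq⟩ := hpi r hr q hq
    have hrq : r ⊆ q := by
      intro z hz
      by_cases hzu : z = u
      · exact hzu ▸ huq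
      · have : G.Adj u z :=
          (hmax r hr).1 (Finset.mem_coe.mpr hur) (Finset.mem_coe.mpr hz) (Ne.symm hzu)
        have : z ∈ G.neighborFinset u := (SimpleGraph.mem_neighborFinset _ _ _).mpr this
        rw [hnbr u huq] at this
        exact Finset.mem_of_mem_erase this
    rw [(hmax r hr).2 q hqcl hrq]
    exact hv0q
end

section
/- Let G be a graph with maximum degree at most 4 and Q a necktie of G. Then no member of Q is an edge (a clique with exactly 2 vertices). -/
universe u

variable {V : Type u}

theorem stmt4 {V : Type u} [Fintype V] [DecidableEq V] (G : SimpleGraph V)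
    [DecidableRel G.Adj] (hdeg : ∀ v, G.degree v ≤ 4)
    (Q : Set (Finset V)) (hQ : IsNecktie G Q) :
    ∀ q ∈ Q, q.card ≠ 2 := by
  rintro q hq hcard
  obtain ⟨⟨hmax, hpair, _⟩, hempty⟩ := hQ
  push_neg at hempty
  obtain ⟨a, b, hab, rfl⟩ := Finset.card_eq_two.mp hcard
  obtain ⟨r, hr, hbr⟩ := hempty b
  obtain ⟨r', hr', har'⟩ := hempty a
  obtain ⟨x, hxq, hxr⟩ := hpair _ hq _ hr
  have hax : x = a := by
    rcases Finset.mem_insert.mp hxq with h | h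
    · exact h
    · simp only [Finset.mem_singleton] at h; subst h; exact absurd hxr hbr
  have har : a ∈ r := hax ▸ hxr
  obtain ⟨y, hyq, hyr'⟩ := hpair _ hq _ hr'
  have hby : y = b := by
    rcases Finset.mem_insert.mp hyq with h | h
    · subst h; exact absurd hyr' har'
    · simpa using h
  have hbr' : b ∈ r' := hby ▸ hyr'
  obtain ⟨v, hvr, hvr'⟩ := hpair _ hr _ hr'
  have hva : v ≠ a := fun h => har' (h ▸ hvr')
  have hvb : v ≠ b := fun h => hbr (h ▸ hvr)
  have hadj_va : G.Adj v a :=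
    (hmax _ hr).1 (by exact_mod_cast hvr) (by exact_mod_cast har) hva
  have hadj_vb : G.Adj v b :=
    (hmax _ hr').1 (by exact_mod_cast hvr') (by exact_mod_cast hbr') hvb
  have hcl2 : G.IsClique ({a, b} : Set V) := by
    have := (hmax _ hq).1
    simpa only [Finset.coe_insert, Finset.coe_singleton] using this
  have hclique : G.IsClique (↑(insert v ({a, b} : Finset V)) : Set V) := by
    simp only [Finset.coe_insert, Finset.coe_singleton]
    refine hcl2.insert ?_
    intro x hx _
    rcases hx with h | h
    · subst h; exact hadj_va
    · rw [Set.mem_singleton_iff] at h; subst h; exact hadj_vb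
  have heq := (hmax _ hq).2 (insert v ({a, b} : Finset V)) hclique
    (Finset.subset_insert _ _)
  have : v ∈ ({a, b} : Finset V) := heq ▸ Finset.mem_insert_self v _
  rcases Finset.mem_insert.mp this with h | h
  · exact hva h
  · exact hvb (Finset.mem_singleton.mp h)
end

section
/- Let G be a graph with maximum degree at most 4 and Q a necktie of G. Then no member of Q has 4 or more vertices. -/
universe u

variable {V : Type u}

theorem stmt5 {V : Type u} [Fintype V] [DecidableEq V] (G : SimpleGraph V)
    [DecidableRel G.Adj] (hdeg : ∀ v, G.degree v ≤ 4)
    (Q : Set (Finset V)) (hQ : IsNecktie G Q) :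
    ∀ q ∈ Q, q.card < 4 := by
  obtain ⟨⟨hmax, hpair, _⟩, hempty⟩ := hQ
  intro q hqQ
  by_contra hc
  push_neg at hc
  have hqclique := (hmax q hqQ).1
  -- each vertex of q has at most one neighbor outside q
  have L1 : ∀ u ∈ q, ∀ w1 w2, G.Adj u w1 → G.Adj u w2 → w1 ∉ q → w2 ∉ q → w1 = w2 := by
    intro u hu w1 w2 h1 h2 hw1 hw2
    by_contra hne
    have hsub : (q.erase u) ∪ {w1, w2} ⊆ G.neighborFinset u := by
      intro x hx
      rw [SimpleGraph.mem_neighborFinset]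
      simp only [Finset.mem_union, Finset.mem_erase, Finset.mem_insert,
        Finset.mem_singleton] at hx
      rcases hx with ⟨hxu, hxq⟩ | rfl | rfl
      · exact hqclique hu hxq (Ne.symm hxu)
      · exact h1
      · exact h2
    have hdisj : Disjoint (q.erase u) ({w1, w2} : Finset V) := by
      rw [Finset.disjoint_right]
      intro x hx hx'
      simp only [Finset.mem_insert, Finset.mem_singleton] at hx
      rcases hx with rfl | rfl
      · exact hw1 (Finset.mem_of_mem_erase hx')
      · exact hw2 (Finset.mem_of_mem_erase hx')
    have hcard : ((q.erase u) ∪ {w1, w2}).card = (q.card - 1) + 2 := by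
      rw [Finset.card_union_of_disjoint hdisj, Finset.card_erase_of_mem hu,
        Finset.card_insert_of_notMem (by simpa using hne), Finset.card_singleton]
    have := Finset.card_le_card hsub
    have hd := hdeg u
    rw [← SimpleGraph.card_neighborFinset_eq_degree] at hd
    omega
  -- every member other than q has a unique vertex outside q
  have L2 : ∀ r ∈ Q, r ≠ q → ∃ w, w ∉ q ∧ w ∈ r ∧ ∀ x ∈ r, x ∉ q → x = w := by
    intro r hr hne
    have hrclique := (hmax r hr).1
    have hns : ¬ r ⊆ q := fun hsub => hne ((hmax r hr).2 q hqclique hsub)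
    obtain ⟨w, hwr, hwq⟩ := Finset.not_subset.mp hns
    obtain ⟨v, hvr, hvq⟩ := hpair r hr q hqQ
    refine ⟨w, hwq, hwr, fun x hx hxq => ?_⟩
    have hvw : G.Adj v w := hrclique hvr hwr (by rintro rfl; exact hwq hvq)
    have hvx : G.Adj v x := hrclique hvr hx (by rintro rfl; exact hxq hvq)
    exact L1 v hvq x w hvx hvw hxq hwq
  push_neg at hempty
  obtain ⟨v0, hv0⟩ := Finset.card_pos.mp (by omega : 0 < q.card)
  obtain ⟨r0, hr0Q, hv0r0⟩ := hempty v0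
  have hr0ne : r0 ≠ q := fun h => hv0r0 (h ▸ hv0)
  obtain ⟨w, hwq, hwr0, hwuniq⟩ := L2 r0 hr0Q hr0ne
  -- every member other than q has exactly w as its outside vertex
  have L3 : ∀ r ∈ Q, r ≠ q → ∀ x ∈ r, x ∉ q → x = w := by
    intro r hr hne
    obtain ⟨w', hw'q, hw'r, hw'uniq⟩ := L2 r hr hne
    have hww' : w' = w := by
      obtain ⟨x, hxr0, hxr⟩ := hpair r0 hr0Q r hr
      by_cases hxq : x ∈ q
      · have h1 : G.Adj x w := (hmax r0 hr0Q).1 hxr0 hwr0 (by rintro rfl; exact hwq hxq)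
        have h2 : G.Adj x w' := (hmax r hr).1 hxr hw'r (by rintro rfl; exact hw'q hxq)
        exact (L1 x hxq w' w h2 h1 hw'q hwq)
      · have e1 := hwuniq x hxr0 hxq
        have e2 := hw'uniq x hxr hxq
        rw [← e1, ← e2]
    intro x hx hxq
    rw [hw'uniq x hx hxq, hww']
  -- the clique {w} ∪ (N(w) ∩ q)
  set A : Finset V := q.filter (fun a => G.Adj w a) with hA
  have hmclique : G.IsClique ((insert w A : Finset V) : Set V) := by
    intro x hx y hy hxy
    simp only [Finset.coe_insert, Set.mem_insert_iff, Finset.mem_coe, hA,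
      Finset.mem_filter] at hx hy
    rcases hx with rfl | ⟨hxq, hxw⟩
    · rcases hy with rfl | ⟨hyq, hyw⟩
      · exact absurd rfl hxy
      · exact hyw
    · rcases hy with rfl | ⟨hyq, hyw⟩
      · exact hxw.symm
      · exact hqclique hxq hyq hxy
  -- every member other than q equals insert w A
  have L4 : ∀ r ∈ Q, r ≠ q → r = insert w A := by
    intro r hr hne
    have hwr : w ∈ r := by
      obtain ⟨w', hw'q, hw'r, hw'uniq⟩ := L2 r hr hne
      have := L3 r hr hne w' hw'r hw'q
      rwa [← this]
    have hsub : r ⊆ insert w A := by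
      intro x hx
      by_cases hxw : x = w
      · simp [hxw]
      · have hxq : x ∈ q := by
          by_contra hxq
          exact hxw (L3 r hr hne x hx hxq)
        have : G.Adj w x := (hmax r hr).1 hwr hx (Ne.symm hxw)
        simp only [Finset.mem_insert, hA, Finset.mem_filter]
        exact Or.inr ⟨hxq, this⟩
    exact (hmax r hr).2 _ hmclique hsub
  -- a vertex of r0 ∩ q lies in every member
  obtain ⟨v, hvr0, hvq⟩ := hpair r0 hr0Q q hqQ
  obtain ⟨r1, hr1Q, hvr1⟩ := hempty v
  have hr1ne : r1 ≠ q := fun h => hvr1 (h ▸ hvq)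
  have : v ∈ insert w A := (L4 r0 hr0Q hr0ne) ▸ hvr0
  rw [← L4 r1 hr1Q hr1ne] at this
  exact hvr1 this
end

section
/- Let G be a connected graph with maximum degree at most 4 that is not isomorphic to the octahedron (the complete tripartite graph K_{2,2,2}). If T is an inner triangle of G, then Q_T = {q : q is a clique of G with |q ∩ T| ≥ 2} is a necktie of G consisting of exactly 4 cliques: T itself and three triangles, one through each edge of T. -/
universe u

variable {V : Type u}

section helpers
variable [Fintype V] [DecidableEq V] {G : SimpleGraph V} [DecidableRel G.Adj]
set_option linter.unusedSectionVars false

lemma common_nbr {a b c wb wc : V}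
    (hab : G.Adj a b) (hac : G.Adj a c) (hbc : b ≠ c)
    (hawb : G.Adj a wb) (hawc : G.Adj a wc)
    (hwbb : ¬ G.Adj wb b) (hwcb : G.Adj wc b)
    (hbwb : b ≠ wb) (hcwb : c ≠ wb) (hbwc : b ≠ wc) (hcwc : c ≠ wc)
    (hdeg : G.degree a ≤ 4) :
    ∀ v, G.Adj a v → G.Adj b v → v = c ∨ v = wc := by
  have hwbwc : wb ≠ wc := fun h => hwbb (by rw [h]; exact hwcb)
  set s : Finset V := insert b (insert c (insert wb {wc})) with hs
  have hcard : s.card = 4 := by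
    rw [hs, Finset.card_insert_of_notMem (by simp [hbc, hbwb, hbwc]),
      Finset.card_insert_of_notMem (by simp [hcwb, hcwc]),
      Finset.card_insert_of_notMem (by simp [hwbwc]), Finset.card_singleton]
  have hsub : s ⊆ G.neighborFinset a := by
    intro v hv
    rw [SimpleGraph.mem_neighborFinset]
    simp only [hs, Finset.mem_insert, Finset.mem_singleton] at hv
    rcases hv with rfl | rfl | rfl | rfl
    · exact hab
    · exact hac
    · exact hawb
    · exact hawc
  have heq : s = G.neighborFinset a := by
    apply Finset.eq_of_subset_of_card_le hsub
    rw [hcard]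
    exact (G.card_neighborFinset_eq_degree a) ▸ hdeg
  intro v hav hbv
  have hv : v ∈ s := by rw [heq]; exact (G.mem_neighborFinset a v).mpr hav
  simp only [hs, Finset.mem_insert, Finset.mem_singleton] at hv
  rcases hv with rfl | rfl | rfl | rfl
  · exact absurd hbv (G.irrefl)
  · exact Or.inl rfl
  · exact absurd hbv.symm hwbb
  · exact Or.inr rfl

lemma apex_max {a b c w : V} (hab : G.Adj a b) (haw : G.Adj a w) (hbw : G.Adj b w)
    (com : ∀ v, G.Adj a v → G.Adj b v → v = c ∨ v = w)
    (hcw : ¬ G.Adj c w) (hcwne : c ≠ w) :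
    MaxClique G ({a, b, w} : Finset V) := by
  have hclique : G.IsClique (({a, b, w} : Finset V) : Set V) := by
    intro x hx y hy hxy
    simp only [Finset.coe_insert, Finset.coe_singleton, Set.mem_insert_iff,
      Set.mem_singleton_iff] at hx hy
    rcases hx with rfl | rfl | rfl <;> rcases hy with rfl | rfl | rfl <;>
      first
        | exact absurd rfl hxy
        | exact hab | exact hab.symm | exact haw | exact haw.symm
        | exact hbw | exact hbw.symm
  refine ⟨hclique, fun t ht hsub => ?_⟩
  refine Finset.Subset.antisymm hsub fun v hv => ?_
  by_contra hvn
  simp only [Finset.mem_insert, Finset.mem_singleton, not_or] at hvn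
  obtain ⟨hva, hvb, hvw⟩ := hvn
  have hat : a ∈ t := hsub (by simp)
  have hbt : b ∈ t := hsub (by simp)
  have hwt : w ∈ t := hsub (by simp)
  have h1 : G.Adj a v := ht (Finset.mem_coe.mpr hat) (Finset.mem_coe.mpr hv) (Ne.symm hva)
  have h2 : G.Adj b v := ht (Finset.mem_coe.mpr hbt) (Finset.mem_coe.mpr hv) (Ne.symm hvb)
  rcases com v h1 h2 with rfl | rfl
  · exact hcw (ht (Finset.mem_coe.mpr hv) (Finset.mem_coe.mpr hwt) hcwne)
  · exact hvw rfl

lemma edge_clique {q : Finset V} {a b c w : V} (hq : MaxClique G q)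
    (ha : a ∈ q) (hb : b ∈ q) (hc : c ∉ q)
    (com : ∀ v, G.Adj a v → G.Adj b v → v = c ∨ v = w)
    (hmax : MaxClique G ({a, b, w} : Finset V)) :
    q = ({a, b, w} : Finset V) := by
  have hsub : q ⊆ ({a, b, w} : Finset V) := by
    intro v hv
    by_cases h1 : v = a
    · simp [h1]
    by_cases h2 : v = b
    · simp [h2]
    have hav : G.Adj a v := hq.1 (Finset.mem_coe.mpr ha) (Finset.mem_coe.mpr hv) (Ne.symm h1)
    have hbv : G.Adj b v := hq.1 (Finset.mem_coe.mpr hb) (Finset.mem_coe.mpr hv) (Ne.symm h2)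
    rcases com v hav hbv with rfl | rfl
    · exact absurd hv hc
    · simp
  exact hq.2 _ hmax.1 hsub

end helpers

theorem stmt6 {V : Type u} [Fintype V] [DecidableEq V] (G : SimpleGraph V)
    [DecidableRel G.Adj] (hconn : G.Connected) (hdeg : ∀ v, G.degree v ≤ 4)
    (hoct : ¬ Nonempty (G ≃g octahedron))
    (T : Finset V) (hT : IsInnerTriangle G T) :
    IsNecktie G (QT G T) ∧ T ∈ QT G T ∧
      ∃ q1 q2 q3 : Finset V,
        q1 ≠ q2 ∧ q1 ≠ q3 ∧ q2 ≠ q3 ∧ T ≠ q1 ∧ T ≠ q2 ∧ T ≠ q3 ∧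
        QT G T = {T, q1, q2, q3} ∧
        IsTriangle G q1 ∧ IsTriangle G q2 ∧ IsTriangle G q3 ∧
        (∀ x ∈ T, ∀ y ∈ T, x ≠ y →
          ∃ q ∈ ({q1, q2, q3} : Set (Finset V)), q ∩ T = ({x, y} : Finset V)) := by
  classical
  obtain ⟨hTmax, hTcard, hedge⟩ := hT
  obtain ⟨a, b, c, hab_ne, hac_ne, hbc_ne, hTdef⟩ := Finset.card_eq_three.mp hTcard
  subst hTdef
  have ha : a ∈ ({a, b, c} : Finset V) := by simp
  have hb : b ∈ ({a, b, c} : Finset V) := by simp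
  have hc : c ∈ ({a, b, c} : Finset V) := by simp
  have hab : G.Adj a b := hTmax.1 (Finset.mem_coe.mpr ha) (Finset.mem_coe.mpr hb) hab_ne
  have hac : G.Adj a c := hTmax.1 (Finset.mem_coe.mpr ha) (Finset.mem_coe.mpr hc) hac_ne
  have hbc : G.Adj b c := hTmax.1 (Finset.mem_coe.mpr hb) (Finset.mem_coe.mpr hc) hbc_ne
  -- extraction of apexes
  have getapex : ∀ x ∈ ({a, b, c} : Finset V), ∀ y ∈ ({a, b, c} : Finset V),
      ∀ z ∈ ({a, b, c} : Finset V), x ≠ y → x ≠ z → y ≠ z →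
      ∃ w, w ∉ ({a, b, c} : Finset V) ∧ G.Adj x w ∧ G.Adj y w ∧ ¬ G.Adj z w := by
    intro x hx y hy z hz hxy hxz hyz
    obtain ⟨T', ⟨hT'cl, hT'card⟩, hT'ne, hT'int⟩ := hedge x hx y hy hxy
    have hxT' : x ∈ T' := by
      have : x ∈ ({a, b, c} : Finset V) ∩ T' := by rw [hT'int]; simp
      exact (Finset.mem_inter.mp this).2
    have hyT' : y ∈ T' := by
      have : y ∈ ({a, b, c} : Finset V) ∩ T' := by rw [hT'int]; simp
      exact (Finset.mem_inter.mp this).2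
    obtain ⟨w, hwT', hwxy⟩ : ∃ w ∈ T', w ∉ ({x, y} : Finset V) := by
      by_contra h
      push_neg at h
      have hsub : T' ⊆ ({x, y} : Finset V) := fun v hv => h v hv
      have h1 := Finset.card_le_card hsub
      have h2 : ({x, y} : Finset V).card ≤ 2 :=
        le_trans (Finset.card_insert_le _ _) (by simp)
      omega
    have hwout : w ∉ ({a, b, c} : Finset V) := by
      intro hwm
      have : w ∈ ({a, b, c} : Finset V) ∩ T' := Finset.mem_inter.mpr ⟨hwm, hwT'⟩
      rw [hT'int] at this
      exact hwxy this
    have hxw_ne : x ≠ w := by rintro rfl; exact hwxy (by simp)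
    have hyw_ne : y ≠ w := by rintro rfl; exact hwxy (by simp)
    have hxw : G.Adj x w := hT'cl (Finset.mem_coe.mpr hxT') (Finset.mem_coe.mpr hwT') hxw_ne
    have hyw : G.Adj y w := hT'cl (Finset.mem_coe.mpr hyT') (Finset.mem_coe.mpr hwT') hyw_ne
    refine ⟨w, hwout, hxw, hyw, ?_⟩
    intro hzw
    have hxyz : ({x, y, z} : Finset V) = ({a, b, c} : Finset V) := by
      apply Finset.eq_of_subset_of_card_le
      · intro v hv
        simp only [Finset.mem_insert, Finset.mem_singleton] at hv
        rcases hv with rfl | rfl | rfl <;> assumption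
      · rw [hTcard, Finset.card_insert_of_notMem (by simp [hxy, hxz]),
          Finset.card_insert_of_notMem (by simp [hyz]), Finset.card_singleton]
    have adjw : ∀ u, u ∈ ({a, b, c} : Finset V) → G.Adj u w := by
      intro u hu
      rw [← hxyz] at hu
      simp only [Finset.mem_insert, Finset.mem_singleton] at hu
      rcases hu with rfl | rfl | rfl
      · exact hxw
      · exact hyw
      · exact hzw
    have hcl : G.IsClique ((insert w ({a, b, c} : Finset V) : Finset V) : Set V) := by
      intro u hu t ht hut
      rw [Finset.mem_coe, Finset.mem_insert] at hu ht
      rcases hu with rfl | hu <;> rcases ht with rfl | ht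
      · exact absurd rfl hut
      · exact (adjw t ht).symm
      · exact adjw u hu
      · exact hTmax.1 (Finset.mem_coe.mpr hu) (Finset.mem_coe.mpr ht) hut
    have heq := hTmax.2 _ hcl (Finset.subset_insert _ _)
    have : w ∈ ({a, b, c} : Finset V) := by rw [heq]; simp
    exact hwout this
  obtain ⟨wc, hwcT, hwca, hwcb, hwcc⟩ := getapex a ha b hb c hc hab_ne hac_ne hbc_ne
  obtain ⟨wb, hwbT, hwba, hwbc', hwbb'⟩ := getapex a ha c hc b hb hac_ne hab_ne hbc_ne.symm
  obtain ⟨wa, hwaT, hwab', hwac', hwaa'⟩ := getapex b hb c hc a ha hbc_ne hab_ne.symm hac_ne.symm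
  simp only [Finset.mem_insert, Finset.mem_singleton, not_or] at hwcT hwbT hwaT
  obtain ⟨hwc_a, hwc_b, hwc_c⟩ := hwcT
  obtain ⟨hwb_a, hwb_b, hwb_c⟩ := hwbT
  obtain ⟨hwa_a, hwa_b, hwa_c⟩ := hwaT
  have comAB : ∀ v, G.Adj a v → G.Adj b v → v = c ∨ v = wc :=
    common_nbr hab hac hbc_ne hwba hwca (fun h => hwbb' h.symm) hwcb.symm
      (Ne.symm hwb_b) (Ne.symm hwb_c) (Ne.symm hwc_b) (Ne.symm hwc_c) (hdeg a)
  have comAC : ∀ v, G.Adj a v → G.Adj c v → v = b ∨ v = wb :=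
    common_nbr hac hab hbc_ne.symm hwca hwba (fun h => hwcc h.symm) hwbc'.symm
      (Ne.symm hwc_c) (Ne.symm hwc_b) (Ne.symm hwb_c) (Ne.symm hwb_b) (hdeg a)
  have comBC : ∀ v, G.Adj b v → G.Adj c v → v = a ∨ v = wa :=
    common_nbr hbc hab.symm (Ne.symm hac_ne) hwcb hwab' (fun h => hwcc h.symm) hwac'.symm
      (Ne.symm hwc_c) (Ne.symm hwc_a) (Ne.symm hwa_c) (Ne.symm hwa_a) (hdeg b)
  have hq1max : MaxClique G ({a, b, wc} : Finset V) :=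
    apex_max hab hwca hwcb comAB hwcc (Ne.symm hwc_c)
  have hq2max : MaxClique G ({b, c, wa} : Finset V) :=
    apex_max hbc hwab' hwac' comBC hwaa' (Ne.symm hwa_a)
  have hq3max : MaxClique G ({a, c, wb} : Finset V) :=
    apex_max hac hwba hwbc' comAC hwbb' (Ne.symm hwb_b)
  -- intersection computations
  have hint1 : ({a, b, wc} : Finset V) ∩ {a, b, c} = {a, b} := by
    apply Finset.Subset.antisymm
    · intro v hv
      obtain ⟨h1, h2⟩ := Finset.mem_inter.mp hv
      simp only [Finset.mem_insert, Finset.mem_singleton] at h1 h2 ⊢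
      rcases h1 with rfl | rfl | rfl
      · exact Or.inl rfl
      · exact Or.inr rfl
      · rcases h2 with h | h | h
        · exact absurd h hwc_a
        · exact absurd h hwc_b
        · exact absurd h hwc_c
    · intro v hv
      simp only [Finset.mem_insert, Finset.mem_singleton] at hv
      rcases hv with rfl | rfl <;> simp
  have hint2 : ({b, c, wa} : Finset V) ∩ {a, b, c} = {b, c} := by
    apply Finset.Subset.antisymm
    · intro v hv
      obtain ⟨h1, h2⟩ := Finset.mem_inter.mp hv
      simp only [Finset.mem_insert, Finset.mem_singleton] at h1 h2 ⊢
      rcases h1 with rfl | rfl | rfl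
      · exact Or.inl rfl
      · exact Or.inr rfl
      · rcases h2 with h | h | h
        · exact absurd h hwa_a
        · exact absurd h hwa_b
        · exact absurd h hwa_c
    · intro v hv
      simp only [Finset.mem_insert, Finset.mem_singleton] at hv
      rcases hv with rfl | rfl <;> simp
  have hint3 : ({a, c, wb} : Finset V) ∩ {a, b, c} = {a, c} := by
    apply Finset.Subset.antisymm
    · intro v hv
      obtain ⟨h1, h2⟩ := Finset.mem_inter.mp hv
      simp only [Finset.mem_insert, Finset.mem_singleton] at h1 h2 ⊢
      rcases h1 with rfl | rfl | rfl
      · exact Or.inl rfl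
      · exact Or.inr rfl
      · rcases h2 with h | h | h
        · exact absurd h hwb_a
        · exact absurd h hwb_b
        · exact absurd h hwb_c
    · intro v hv
      simp only [Finset.mem_insert, Finset.mem_singleton] at hv
      rcases hv with rfl | rfl <;> simp
  have hpair_ab : ({a, b} : Finset V).card = 2 := by
    rw [Finset.card_insert_of_notMem (by simp [hab_ne]), Finset.card_singleton]
  have hpair_bc : ({b, c} : Finset V).card = 2 := by
    rw [Finset.card_insert_of_notMem (by simp [hbc_ne]), Finset.card_singleton]
  have hpair_ac : ({a, c} : Finset V).card = 2 := by
    rw [Finset.card_insert_of_notMem (by simp [hac_ne]), Finset.card_singleton]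
  -- QT memberships
  have hTQT : ({a, b, c} : Finset V) ∈ QT G {a, b, c} :=
    ⟨hTmax, by rw [Finset.inter_self, hTcard]; omega⟩
  have h1QT : ({a, b, wc} : Finset V) ∈ QT G {a, b, c} :=
    ⟨hq1max, by rw [hint1, hpair_ab]⟩
  have h2QT : ({b, c, wa} : Finset V) ∈ QT G {a, b, c} :=
    ⟨hq2max, by rw [hint2, hpair_bc]⟩
  have h3QT : ({a, c, wb} : Finset V) ∈ QT G {a, b, c} :=
    ⟨hq3max, by rw [hint3, hpair_ac]⟩
  -- characterization of members of QT
  have hchar : ∀ q, MaxClique G q → 2 ≤ (q ∩ ({a, b, c} : Finset V)).card →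
      q = {a, b, c} ∨ q = {a, b, wc} ∨ q = {b, c, wa} ∨ q = {a, c, wb} := by
    intro q hq hcard2
    have hfull : a ∈ q → b ∈ q → c ∈ q → q = {a, b, c} := by
      intro haq hbq hcq
      have hsub : ({a, b, c} : Finset V) ⊆ q := by
        intro v hv
        simp only [Finset.mem_insert, Finset.mem_singleton] at hv
        rcases hv with rfl | rfl | rfl <;> assumption
      exact (hTmax.2 q hq.1 hsub).symm
    have caseAB : a ∈ q → b ∈ q → q = {a, b, c} ∨ q = {a, b, wc} := by
      intro haq hbq
      by_cases hcq : c ∈ q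
      · exact Or.inl (hfull haq hbq hcq)
      · exact Or.inr (edge_clique hq haq hbq hcq comAB hq1max)
    have caseBC : b ∈ q → c ∈ q → q = {a, b, c} ∨ q = {b, c, wa} := by
      intro hbq hcq
      by_cases haq : a ∈ q
      · exact Or.inl (hfull haq hbq hcq)
      · exact Or.inr (edge_clique hq hbq hcq haq comBC hq2max)
    have caseAC : a ∈ q → c ∈ q → q = {a, b, c} ∨ q = {a, c, wb} := by
      intro haq hcq
      by_cases hbq : b ∈ q
      · exact Or.inl (hfull haq hbq hcq)
      · exact Or.inr (edge_clique hq haq hcq hbq comAC hq3max)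
    obtain ⟨x, hx, y, hy, hxy⟩ := Finset.one_lt_card.mp hcard2
    obtain ⟨hxq, hxT⟩ := Finset.mem_inter.mp hx
    obtain ⟨hyq, hyT⟩ := Finset.mem_inter.mp hy
    simp only [Finset.mem_insert, Finset.mem_singleton] at hxT hyT
    rcases hxT with rfl | rfl | rfl <;> rcases hyT with rfl | rfl | rfl
    · exact absurd rfl hxy
    · exact (caseAB hxq hyq).imp id Or.inl
    · exact (caseAC hxq hyq).imp id (fun h => Or.inr (Or.inr h))
    · exact (caseAB hyq hxq).imp id Or.inl
    · exact absurd rfl hxy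
    · exact (caseBC hxq hyq).imp id (fun h => Or.inr (Or.inl h))
    · exact (caseAC hyq hxq).imp id (fun h => Or.inr (Or.inr h))
    · exact (caseBC hyq hxq).imp id (fun h => Or.inr (Or.inl h))
    · exact absurd rfl hxy
  have hQTeq : QT G ({a, b, c} : Finset V) =
      ({ {a, b, c}, {a, b, wc}, {b, c, wa}, {a, c, wb} } : Set (Finset V)) := by
    ext q
    constructor
    · rintro ⟨hq, hcard2⟩
      simpa using hchar q hq hcard2
    · intro hq
      simp only [Set.mem_insert_iff, Set.mem_singleton_iff] at hq
      rcases hq with rfl | rfl | rfl | rfl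
      · exact hTQT
      · exact h1QT
      · exact h2QT
      · exact h3QT
  refine ⟨⟨⟨fun q hq => hq.1, ?_, ?_⟩, ?_⟩, hTQT,
    {a, b, wc}, {b, c, wa}, {a, c, wb}, ?_, ?_, ?_, ?_, ?_, ?_, hQTeq, ?_, ?_, ?_, ?_⟩
  · -- PairwiseIntersecting
    rw [hQTeq]
    intro q hq r hr
    simp only [Set.mem_insert_iff, Set.mem_singleton_iff] at hq hr
    rcases hq with rfl | rfl | rfl | rfl <;> rcases hr with rfl | rfl | rfl | rfl
    · exact ⟨a, by simp, by simp⟩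
    · exact ⟨a, by simp, by simp⟩
    · exact ⟨b, by simp, by simp⟩
    · exact ⟨a, by simp, by simp⟩
    · exact ⟨a, by simp, by simp⟩
    · exact ⟨a, by simp, by simp⟩
    · exact ⟨b, by simp, by simp⟩
    · exact ⟨a, by simp, by simp⟩
    · exact ⟨b, by simp, by simp⟩
    · exact ⟨b, by simp, by simp⟩
    · exact ⟨b, by simp, by simp⟩
    · exact ⟨c, by simp, by simp⟩
    · exact ⟨a, by simp, by simp⟩
    · exact ⟨a, by simp, by simp⟩
    · exact ⟨c, by simp, by simp⟩
    · exact ⟨a, by simp, by simp⟩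
  · -- maximality
    intro Q' hsubQ hallmax hpi
    ext q
    refine ⟨fun hq' => ?_, fun h => hsubQ h⟩
    refine ⟨hallmax q hq', ?_⟩
    have two_in : ∀ x y : V, x ≠ y → x ∈ ({a, b, c} : Finset V) →
        y ∈ ({a, b, c} : Finset V) → x ∈ q → y ∈ q →
        2 ≤ (q ∩ ({a, b, c} : Finset V)).card := by
      intro x y hxy hxT hyT hxq hyq
      have hsub : ({x, y} : Finset V) ⊆ q ∩ {a, b, c} := by
        intro v hv
        simp only [Finset.mem_insert, Finset.mem_singleton] at hv
        rcases hv with rfl | rfl <;> exact Finset.mem_inter.mpr ⟨‹_›, ‹_›⟩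
      calc 2 = ({x, y} : Finset V).card := by
            rw [Finset.card_insert_of_notMem (by simp [hxy]), Finset.card_singleton]
        _ ≤ _ := Finset.card_le_card hsub
    obtain ⟨v0, hv0q, hv0T⟩ := hpi q hq' {a, b, c} (hsubQ hTQT)
    simp only [Finset.mem_insert, Finset.mem_singleton] at hv0T
    rcases hv0T with rfl | rfl | rfl
    · by_cases hbq : b ∈ q
      · exact two_in v0 b hab_ne ha hb hv0q hbq
      by_cases hcq : c ∈ q
      · exact two_in v0 c hac_ne ha hc hv0q hcq
      exfalso
      obtain ⟨w, hwq, hwm⟩ := hpi q hq' {b, c, wa} (hsubQ h2QT)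
      simp only [Finset.mem_insert, Finset.mem_singleton] at hwm
      rcases hwm with rfl | rfl | rfl
      · exact hbq hwq
      · exact hcq hwq
      · exact hwaa' ((hallmax q hq').1 (Finset.mem_coe.mpr hv0q) (Finset.mem_coe.mpr hwq)
          (fun h => hwa_a h.symm))
    · by_cases haq : a ∈ q
      · exact two_in v0 a (Ne.symm hab_ne) hb ha hv0q haq
      by_cases hcq : c ∈ q
      · exact two_in v0 c hbc_ne hb hc hv0q hcq
      exfalso
      obtain ⟨w, hwq, hwm⟩ := hpi q hq' {a, c, wb} (hsubQ h3QT)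
      simp only [Finset.mem_insert, Finset.mem_singleton] at hwm
      rcases hwm with rfl | rfl | rfl
      · exact haq hwq
      · exact hcq hwq
      · exact hwbb' ((hallmax q hq').1 (Finset.mem_coe.mpr hv0q) (Finset.mem_coe.mpr hwq)
          (fun h => hwb_b h.symm))
    · by_cases haq : a ∈ q
      · exact two_in v0 a (Ne.symm hac_ne) hc ha hv0q haq
      by_cases hbq : b ∈ q
      · exact two_in v0 b (Ne.symm hbc_ne) hc hb hv0q hbq
      exfalso
      obtain ⟨w, hwq, hwm⟩ := hpi q hq' {a, b, wc} (hsubQ h1QT)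
      simp only [Finset.mem_insert, Finset.mem_singleton] at hwm
      rcases hwm with rfl | rfl | rfl
      · exact haq hwq
      · exact hbq hwq
      · exact hwcc ((hallmax q hq').1 (Finset.mem_coe.mpr hv0q) (Finset.mem_coe.mpr hwq)
          (fun h => hwc_c h.symm))
  · -- no common vertex
    rintro ⟨v, hv⟩
    have h1 := hv _ hTQT
    simp only [Finset.mem_insert, Finset.mem_singleton] at h1
    rcases h1 with rfl | rfl | rfl
    · have h2 := hv _ h2QT
      simp only [Finset.mem_insert, Finset.mem_singleton] at h2
      rcases h2 with h | h | h
      · exact hab_ne h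
      · exact hac_ne h
      · exact hwa_a h.symm
    · have h2 := hv _ h3QT
      simp only [Finset.mem_insert, Finset.mem_singleton] at h2
      rcases h2 with h | h | h
      · exact hab_ne h.symm
      · exact hbc_ne h
      · exact hwb_b h.symm
    · have h2 := hv _ h1QT
      simp only [Finset.mem_insert, Finset.mem_singleton] at h2
      rcases h2 with h | h | h
      · exact hac_ne h.symm
      · exact hbc_ne h.symm
      · exact hwc_c h.symm
  · -- q1 ≠ q2
    intro h
    have : a ∈ ({b, c, wa} : Finset V) := h ▸ (by simp)
    simp only [Finset.mem_insert, Finset.mem_singleton] at this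
    rcases this with h' | h' | h'
    · exact hab_ne h'
    · exact hac_ne h'
    · exact hwa_a h'.symm
  · -- q1 ≠ q3
    intro h
    have : b ∈ ({a, c, wb} : Finset V) := h ▸ (by simp)
    simp only [Finset.mem_insert, Finset.mem_singleton] at this
    rcases this with h' | h' | h'
    · exact hab_ne h'.symm
    · exact hbc_ne h'
    · exact hwb_b h'.symm
  · -- q2 ≠ q3
    intro h
    have : b ∈ ({a, c, wb} : Finset V) := h ▸ (by simp)
    simp only [Finset.mem_insert, Finset.mem_singleton] at this
    rcases this with h' | h' | h'
    · exact hab_ne h'.symm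
    · exact hbc_ne h'
    · exact hwb_b h'.symm
  · -- T ≠ q1
    intro h
    have : c ∈ ({a, b, wc} : Finset V) := h ▸ hc
    simp only [Finset.mem_insert, Finset.mem_singleton] at this
    rcases this with h' | h' | h'
    · exact hac_ne h'.symm
    · exact hbc_ne h'.symm
    · exact hwc_c h'.symm
  · -- T ≠ q2
    intro h
    have : a ∈ ({b, c, wa} : Finset V) := h ▸ ha
    simp only [Finset.mem_insert, Finset.mem_singleton] at this
    rcases this with h' | h' | h'
    · exact hab_ne h'
    · exact hac_ne h'
    · exact hwa_a h'.symm
  · -- T ≠ q3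
    intro h
    have : b ∈ ({a, c, wb} : Finset V) := h ▸ hb
    simp only [Finset.mem_insert, Finset.mem_singleton] at this
    rcases this with h' | h' | h'
    · exact hab_ne h'.symm
    · exact hbc_ne h'
    · exact hwb_b h'.symm
  · exact ⟨hq1max.1, by
      rw [Finset.card_insert_of_notMem (by simp [hab_ne, Ne.symm hwc_a]),
        Finset.card_insert_of_notMem (by simp [Ne.symm hwc_b]), Finset.card_singleton]⟩
  · exact ⟨hq2max.1, by
      rw [Finset.card_insert_of_notMem (by simp [hbc_ne, Ne.symm hwa_b]),
        Finset.card_insert_of_notMem (by simp [Ne.symm hwa_c]), Finset.card_singleton]⟩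
  · exact ⟨hq3max.1, by
      rw [Finset.card_insert_of_notMem (by simp [hac_ne, Ne.symm hwb_a]),
        Finset.card_insert_of_notMem (by simp [Ne.symm hwb_c]), Finset.card_singleton]⟩
  · -- per-edge clause
    intro x hx y hy hxy
    simp only [Finset.mem_insert, Finset.mem_singleton] at hx hy
    rcases hx with rfl | rfl | rfl <;> rcases hy with rfl | rfl | rfl
    · exact absurd rfl hxy
    · exact ⟨{x, y, wc}, by simp, hint1⟩
    · exact ⟨{x, y, wb}, by simp, hint3⟩
    · exact ⟨{y, x, wc}, by simp, by rw [hint1]; exact Finset.pair_comm y x⟩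
    · exact absurd rfl hxy
    · exact ⟨{x, y, wa}, by simp, hint2⟩
    · exact ⟨{y, x, wb}, by simp, by rw [hint3]; exact Finset.pair_comm y x⟩
    · exact ⟨{y, x, wa}, by simp, by rw [hint2]; exact Finset.pair_comm y x⟩
    · exact absurd rfl hxy
end

section
/- Let G be a connected graph with maximum degree at most 4, not isomorphic to the octahedron. Then for every necktie Q of G there exists an inner triangle T of G such that Q = Q_T = {q : q clique of G, |q ∩ T| ≥ 2}. -/
universe u

variable {V : Type u}

section Aux
set_option linter.unusedSectionVars false
variable {V : Type u} [Fintype V] [DecidableEq V] (G : SimpleGraph V) [DecidableRel G.Adj]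

lemma nbrs_bound (hdeg : ∀ v, G.degree v ≤ 4) {v : V} {s : Finset V}
    (hs : s ⊆ G.neighborFinset v) : s.card ≤ 4 :=
  (Finset.card_le_card hs).trans (hdeg v)

lemma clique_adj {s : Finset V} (h : G.IsClique (s : Set V)) {x y : V}
    (hx : x ∈ s) (hy : y ∈ s) (hne : x ≠ y) : G.Adj x y :=
  h (by exact_mod_cast hx) (by exact_mod_cast hy) hne

lemma five_nbrs (hdeg : ∀ v, G.degree v ≤ 4) {v a b c d e : V}
    (h1 : G.Adj v a) (h2 : G.Adj v b) (h3 : G.Adj v c) (h4 : G.Adj v d) (h5 : G.Adj v e)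
    (hab : a ≠ b) (hac : a ≠ c) (had : a ≠ d) (hae : a ≠ e)
    (hbc : b ≠ c) (hbd : b ≠ d) (hbe : b ≠ e) (hcd : c ≠ d) (hce : c ≠ e)
    (hde : d ≠ e) : False := by
  have hsub : ({a,b,c,d,e} : Finset V) ⊆ G.neighborFinset v := by
    intro x hx
    simp only [Finset.mem_insert, Finset.mem_singleton] at hx
    rw [SimpleGraph.mem_neighborFinset]
    rcases hx with rfl|rfl|rfl|rfl|rfl <;> assumption
  have h4' := nbrs_bound G hdeg hsub
  have hcard : ({a,b,c,d,e} : Finset V).card = 5 := by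
    simp [Finset.card_insert_of_notMem, hab, hac, had, hae, hbc, hbd, hbe, hcd, hce, hde]
  omega

lemma maxclique_missing {q : Finset V} (hq : MaxClique G q) {v : V} (hv : v ∉ q) :
    ∃ w ∈ q, ¬ G.Adj v w := by
  by_contra h
  push_neg at h
  have hcl : G.IsClique (↑(insert v q) : Set V) := by
    rw [Finset.coe_insert, SimpleGraph.isClique_insert]
    exact ⟨hq.1, fun b hb _ => h b (Finset.mem_coe.mp hb)⟩
  have heq := hq.2 _ hcl (Finset.subset_insert _ _)
  exact hv (heq ▸ Finset.mem_insert_self v q)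

lemma clique_card_le (hdeg : ∀ v, G.degree v ≤ 4) {s : Finset V}
    (hs : G.IsClique (s : Set V)) : s.card ≤ 5 := by
  rcases Finset.eq_empty_or_nonempty s with rfl | ⟨v, hv⟩
  · simp
  · have hsub : s.erase v ⊆ G.neighborFinset v := by
      intro x hx
      rw [SimpleGraph.mem_neighborFinset]
      exact clique_adj G hs hv (Finset.mem_of_mem_erase hx)
        (fun h => (Finset.ne_of_mem_erase hx) h.symm)
    have := nbrs_bound G hdeg hsub
    have := Finset.card_erase_add_one hv
    omega

lemma exists_maxclique (s : Finset V) (hs : G.IsClique (s : Set V)) :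
    ∃ q, MaxClique G q ∧ s ⊆ q := by
  classical
  have hne : (Finset.univ.filter
      (fun t : Finset V => G.IsClique (t : Set V) ∧ s ⊆ t)).Nonempty :=
    ⟨s, by simp [hs]⟩
  obtain ⟨q, hq, hmax⟩ := Finset.exists_max_image _ Finset.card hne
  simp only [Finset.mem_filter, Finset.mem_univ, true_and] at hq hmax
  exact ⟨q, ⟨hq.1, fun t ht hsub =>
    Finset.eq_of_subset_of_card_le hsub (hmax t ⟨ht, hq.2.trans hsub⟩)⟩, hq.2⟩

lemma closure_all (hc : G.Preconnected) (S : Set V)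
    (hcl : ∀ v ∈ S, ∀ w, G.Adj v w → w ∈ S) {u : V} (hu : u ∈ S) : ∀ v, v ∈ S := by
  have key : ∀ {s t : V} (p : G.Walk s t), s ∈ S → t ∈ S := by
    intro s t p
    induction p with
    | nil => exact id
    | cons h _ ih => exact fun hs => ih (hcl _ hs _ h)
  intro v
  obtain ⟨p⟩ := hc u v
  exact key p hu


lemma caseI_sub (hdeg : ∀ v, G.degree v ≤ 4) {q : Finset V} (hq : MaxClique G q)
    {a b c w s m : V} (hw : w ∈ q) (hs : s ∈ q) (hsw : s ≠ w)
    (hwa : G.Adj w a) (hwb : G.Adj w b) (hwc : G.Adj w c)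
    (haq : a ∉ q) (hbq : b ∉ q) (hcq : c ∉ q)
    (hab : a ≠ b) (hac : a ≠ c) (hbc : b ≠ c)
    (hmq : m ∉ q) (hms : G.Adj m s) (hmw : G.Adj m w) : False := by
  obtain ⟨t, htq, hmt⟩ := maxclique_missing G hq hmq
  have hts : t ≠ s := fun h => hmt (by rw [h]; exact hms)
  have htw : t ≠ w := fun h => hmt (by rw [h]; exact hmw)
  have hws : G.Adj w s := clique_adj G hq.1 hw hs (Ne.symm hsw)
  have hwt : G.Adj w t := clique_adj G hq.1 hw htq (Ne.symm htw)
  have hsa : s ≠ a := ne_of_mem_of_not_mem hs haq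
  have hsb : s ≠ b := ne_of_mem_of_not_mem hs hbq
  have hsc : s ≠ c := ne_of_mem_of_not_mem hs hcq
  have hta : t ≠ a := ne_of_mem_of_not_mem htq haq
  have htb : t ≠ b := ne_of_mem_of_not_mem htq hbq
  have htc : t ≠ c := ne_of_mem_of_not_mem htq hcq
  exact five_nbrs G hdeg hwa hwb hwc hws hwt hab hac hsa.symm hta.symm hbc
    hsb.symm htb.symm hsc.symm htc.symm hts.symm

lemma caseII (hdeg : ∀ v, G.degree v ≤ 4) {q q1 : Finset V}
    (hq : MaxClique G q) (hq1 : MaxClique G q1)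
    {a b c x : V} (hab : G.Adj a b) (hac : G.Adj a c) (hbc : b ≠ c)
    (haq : a ∈ q) (hbq : b ∉ q) (hcq : c ∉ q)
    (hb1 : b ∈ q1) (hc1 : c ∈ q1) (ha1 : a ∉ q1)
    (hxq : x ∈ q) (hx1 : x ∈ q1) : False := by
  have hxa : x ≠ a := ne_of_mem_of_not_mem hx1 ha1
  have hxb : x ≠ b := ne_of_mem_of_not_mem hxq hbq
  have hxc : x ≠ c := ne_of_mem_of_not_mem hxq hcq
  have hxa' : G.Adj x a := clique_adj G hq.1 hxq haq hxa
  have hxb' : G.Adj x b := clique_adj G hq1.1 hx1 hb1 hxb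
  have hxc' : G.Adj x c := clique_adj G hq1.1 hx1 hc1 hxc
  obtain ⟨u, huq, hbu⟩ := maxclique_missing G hq hbq
  obtain ⟨w, hwq1, haw⟩ := maxclique_missing G hq1 ha1
  have hua : u ≠ a := fun h => hbu (by rw [h]; exact hab.symm)
  have hux : u ≠ x := fun h => hbu (by rw [h]; exact hxb'.symm)
  have hwb : w ≠ b := fun h => haw (by rw [h]; exact hab)
  have hwc : w ≠ c := fun h => haw (by rw [h]; exact hac)
  have hwx : w ≠ x := fun h => haw (by rw [h]; exact hxa'.symm)
  have hwa : w ≠ a := ne_of_mem_of_not_mem hwq1 ha1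
  have hxu : G.Adj x u := clique_adj G hq.1 hxq huq (Ne.symm hux)
  have hxw : G.Adj x w := clique_adj G hq1.1 hx1 hwq1 (Ne.symm hwx)
  have hub : u ≠ b := ne_of_mem_of_not_mem huq hbq
  have huc : u ≠ c := ne_of_mem_of_not_mem huq hcq
  have hbw : G.Adj b w := clique_adj G hq1.1 hb1 hwq1 (Ne.symm hwb)
  have huw : u ≠ w := fun h => hbu (by rw [h]; exact hbw)
  exact five_nbrs G hdeg hxa' hxb' hxc' hxu hxw hab.ne hac.ne hua.symm hwa.symm
    hbc hub.symm hwb.symm huc.symm hwc.symm huw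


lemma octa_adj (p r : Fin 3 × Fin 2) : octahedron.Adj p r ↔ p.1 ≠ r.1 := Iff.rfl

set_option maxHeartbeats 1000000 in
lemma octa_iso (hconn : G.Connected) (hdeg : ∀ v, G.degree v ≤ 4)
    {a b c x y z : V}
    (hab : G.Adj a b) (hac : G.Adj a c) (hbc : G.Adj b c)
    (hxb : G.Adj x b) (hxc : G.Adj x c)
    (hya : G.Adj y a) (hyc : G.Adj y c)
    (hza : G.Adj z a) (hzb : G.Adj z b)
    (hxy : G.Adj x y) (hxz : G.Adj x z) (hyz : G.Adj y z)
    (hxa : x ≠ a) (hyb : y ≠ b) (hzc : z ≠ c) :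
    Nonempty (G ≃g octahedron) := by
  classical
  -- degree closures
  have hclA : ∀ w, G.Adj a w → w = b ∨ w = c ∨ w = y ∨ w = z := by
    intro w hw
    by_contra h
    push_neg at h
    obtain ⟨h1, h2, h3, h4⟩ := h
    exact five_nbrs G hdeg hab hac hya.symm hza.symm hw hbc.ne hyb.symm
      hzb.ne.symm (Ne.symm h1) hyc.ne.symm hzc.symm (Ne.symm h2) hyz.ne
      (Ne.symm h3) (Ne.symm h4)
  have hclB : ∀ w, G.Adj b w → w = a ∨ w = c ∨ w = x ∨ w = z := by
    intro w hw
    by_contra h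
    push_neg at h
    obtain ⟨h1, h2, h3, h4⟩ := h
    exact five_nbrs G hdeg hab.symm hbc hxb.symm hzb.symm hw hac.ne hxa.symm
      hza.ne.symm (Ne.symm h1) hxc.ne.symm hzc.symm (Ne.symm h2) hxz.ne
      (Ne.symm h3) (Ne.symm h4)
  have hclC : ∀ w, G.Adj c w → w = a ∨ w = b ∨ w = x ∨ w = y := by
    intro w hw
    by_contra h
    push_neg at h
    obtain ⟨h1, h2, h3, h4⟩ := h
    exact five_nbrs G hdeg hac.symm hbc.symm hxc.symm hyc.symm hw hab.ne
      hxa.symm hya.ne.symm (Ne.symm h1) hxb.ne.symm hyb.symm (Ne.symm h2)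
      hxy.ne (Ne.symm h3) (Ne.symm h4)
  have hclX : ∀ w, G.Adj x w → w = b ∨ w = c ∨ w = y ∨ w = z := by
    intro w hw
    by_contra h
    push_neg at h
    obtain ⟨h1, h2, h3, h4⟩ := h
    exact five_nbrs G hdeg hxb hxc hxy hxz hw hbc.ne hyb.symm hzb.ne.symm
      (Ne.symm h1) hyc.ne.symm hzc.symm (Ne.symm h2) hyz.ne (Ne.symm h3)
      (Ne.symm h4)
  have hclY : ∀ w, G.Adj y w → w = a ∨ w = c ∨ w = x ∨ w = z := by
    intro w hw
    by_contra h
    push_neg at h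
    obtain ⟨h1, h2, h3, h4⟩ := h
    exact five_nbrs G hdeg hya hyc hxy.symm hyz hw hac.ne hxa.symm hza.ne.symm
      (Ne.symm h1) hxc.ne.symm hzc.symm (Ne.symm h2) hxz.ne (Ne.symm h3)
      (Ne.symm h4)
  have hclZ : ∀ w, G.Adj z w → w = a ∨ w = b ∨ w = x ∨ w = y := by
    intro w hw
    by_contra h
    push_neg at h
    obtain ⟨h1, h2, h3, h4⟩ := h
    exact five_nbrs G hdeg hza hzb hxz.symm hyz.symm hw hab.ne hxa.symm
      hya.ne.symm (Ne.symm h1) hxb.ne.symm hyb.symm (Ne.symm h2) hxy.ne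
      (Ne.symm h3) (Ne.symm h4)
  -- non-adjacencies
  have hnax : ¬ G.Adj a x := by
    intro h
    rcases hclA x h with h' | h' | h' | h'
    exacts [hxb.ne h', hxc.ne h', hxy.ne h', hxz.ne h']
  have hnby : ¬ G.Adj b y := by
    intro h
    rcases hclB y h with h' | h' | h' | h'
    exacts [hya.ne h', hyc.ne h', hxy.ne.symm h', hyz.ne h']
  have hncz : ¬ G.Adj c z := by
    intro h
    rcases hclC z h with h' | h' | h' | h'
    exacts [hza.ne h', hzb.ne h', hxz.ne.symm h', hyz.ne.symm h']
  have hnxa : ¬ G.Adj x a := fun h => hnax h.symm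
  have hnyb : ¬ G.Adj y b := fun h => hnby h.symm
  have hnzc : ¬ G.Adj z c := fun h => hncz h.symm
  have hnaa : ¬ G.Adj a a := G.loopless.irrefl a
  have hnbb : ¬ G.Adj b b := G.loopless.irrefl b
  have hncc : ¬ G.Adj c c := G.loopless.irrefl c
  have hnxx : ¬ G.Adj x x := G.loopless.irrefl x
  have hnyy : ¬ G.Adj y y := G.loopless.irrefl y
  have hnzz : ¬ G.Adj z z := G.loopless.irrefl z
  -- all vertices are among the six
  have hS : ∀ v : V, v ∈ ({a, b, c, x, y, z} : Set V) := by
    apply closure_all G hconn.preconnected _ _ (show a ∈ ({a,b,c,x,y,z} : Set V) by simp)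
    intro v hv w hw
    simp only [Set.mem_insert_iff, Set.mem_singleton_iff] at hv ⊢
    rcases hv with rfl | rfl | rfl | rfl | rfl | rfl
    · rcases hclA w hw with h | h | h | h <;> tauto
    · rcases hclB w hw with h | h | h | h <;> tauto
    · rcases hclC w hw with h | h | h | h <;> tauto
    · rcases hclX w hw with h | h | h | h <;> tauto
    · rcases hclY w hw with h | h | h | h <;> tauto
    · rcases hclZ w hw with h | h | h | h <;> tauto
  -- symmetric adjacency copies for `assumption`
  have hba := hab.symm; have hca := hac.symm; have hcb := hbc.symm
  have hbx := hxb.symm; have hcx := hxc.symm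
  have hay := hya.symm; have hcy := hyc.symm
  have haz := hza.symm; have hbz := hzb.symm
  have hyx := hxy.symm; have hzx := hxz.symm; have hzy := hyz.symm
  -- the bijection
  set f : V → Fin 3 × Fin 2 := fun v =>
    if v = a then (0,0) else if v = b then (1,0) else if v = c then (2,0)
    else if v = x then (0,1) else if v = y then (1,1) else (2,1) with hf
  set g : Fin 3 × Fin 2 → V := fun p => ![![a, x], ![b, y], ![c, z]] p.1 p.2 with hg
  have hfa : f a = (0,0) := by simp [hf]
  have hfb : f b = (1,0) := by simp [hf, hab.ne.symm]
  have hfc : f c = (2,0) := by simp [hf, hac.ne.symm, hbc.ne.symm]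
  have hfx : f x = (0,1) := by simp [hf, hxa, hxb.ne, hxc.ne]
  have hfy : f y = (1,1) := by simp [hf, hya.ne, hyb, hyc.ne, hxy.ne.symm]
  have hfz : f z = (2,1) := by
    simp [hf, hza.ne, hzb.ne, hzc, hxz.ne.symm, hyz.ne.symm]
  have hleft : Function.LeftInverse g f := by
    intro v
    rcases hS v with rfl | rfl | rfl | rfl | rfl | rfl
    · rw [hfa]; simp [hg]
    · rw [hfb]; simp [hg]
    · rw [hfc]; simp [hg]
    · rw [hfx]; simp [hg]
    · rw [hfy]; simp [hg]
    · rw [hfz]; simp [hg]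
  have hright : Function.RightInverse g f := by
    intro p
    fin_cases p <;>
      first
        | exact hfa | exact hfb | exact hfc | exact hfx | exact hfy | exact hfz
  refine ⟨⟨⟨f, g, hleft, hright⟩, ?_⟩⟩
  intro u v
  have hu := hS u
  have hv := hS v
  simp only [Set.mem_insert_iff, Set.mem_singleton_iff] at hu hv
  rcases hu with rfl | rfl | rfl | rfl | rfl | rfl <;>
    rcases hv with rfl | rfl | rfl | rfl | rfl | rfl <;>
      simp only [Equiv.coe_fn_mk, hfa, hfb, hfc, hfx, hfy, hfz, octa_adj] <;>
        first
          | exact iff_of_true (by decide) (by assumption)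
          | exact iff_of_false (by decide) (by assumption)


set_option maxHeartbeats 1000000 in
lemma necktie_triple (hdeg : ∀ v, G.degree v ≤ 4) {Q : Set (Finset V)}
    (hQ : IsNecktie G Q) {q0 : Finset V} (hq0 : q0 ∈ Q) :
    ∃ q1 q2 q3, q1 ∈ Q ∧ q2 ∈ Q ∧ q3 ∈ Q ∧
      ∃ a b c : V, a ∈ q2 ∧ a ∈ q3 ∧ a ∉ q1 ∧ b ∈ q1 ∧ b ∈ q3 ∧ b ∉ q2 ∧
        c ∈ q1 ∧ c ∈ q2 ∧ c ∉ q3 ∧ ∀ v, ¬(v ∈ q1 ∧ v ∈ q2 ∧ v ∈ q3) := by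
  classical
  obtain ⟨⟨hQmc, hPI, _⟩, hniv⟩ := hQ
  have hmiss : ∀ v : V, ∃ q ∈ Q, v ∉ q := by push_neg at hniv; exact hniv
  have hmeminf : ∀ (v : V) (S : Finset (Finset V)), (∀ r ∈ S, v ∈ r) → v ∈ S.inf id := by
    intro v S h
    exact Finset.singleton_subset_iff.mp
      (Finset.le_inf fun r hr => Finset.singleton_subset_iff.mpr (h r hr))
  have hinfmem : ∀ (v : V) (S : Finset (Finset V)) (r : Finset V),
      r ∈ S → v ∈ S.inf id → v ∈ r := by
    intro v S r hr hv
    exact (Finset.inf_le hr : S.inf id ⊆ id r) hv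
  -- Part A : some finite subfamily has empty intersection
  have partA : ∀ n (t : Finset V), t.card ≤ n →
      (∃ R : Finset (Finset V), ↑R ⊆ Q ∧ R.Nonempty ∧ R.inf id = t) →
      ∃ R : Finset (Finset V), ↑R ⊆ Q ∧ R.Nonempty ∧ R.inf id = ∅ := by
    intro n
    induction n with
    | zero =>
      intro t ht hR
      rw [Nat.le_zero, Finset.card_eq_zero] at ht
      exact ht ▸ hR
    | succ n ih =>
      intro t ht hR
      obtain ⟨R, hRQ, hRne, hRinf⟩ := hR
      rcases t.eq_empty_or_nonempty with rfl | ⟨v, hv⟩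
      · exact ⟨R, hRQ, hRne, hRinf⟩
      · obtain ⟨q', hq'Q, hvq'⟩ := hmiss v
        refine ih (q' ∩ t) ?_ ⟨insert q' R, ?_, ⟨q', Finset.mem_insert_self _ _⟩, ?_⟩
        · have hss : q' ∩ t ⊂ t := by
            refine ⟨Finset.inter_subset_right, fun hsub => hvq' ?_⟩
            exact (Finset.mem_inter.mp (hsub hv)).1
          have := Finset.card_lt_card hss
          omega
        · intro r hr
          simp only [Finset.coe_insert, Set.mem_insert_iff] at hr
          rcases hr with rfl | hr
          · exact hq'Q
          · exact hRQ hr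
        · rw [Finset.inf_insert, hRinf]
          simp [Finset.inf_eq_inter]
  obtain ⟨R0, hR0⟩ := partA q0.card q0 le_rfl
    ⟨{q0}, by simp [hq0], ⟨q0, by simp⟩, by simp⟩
  -- Part B : a minimal such subfamily
  have hsetne : {n | ∃ R : Finset (Finset V),
      (↑R ⊆ Q ∧ R.Nonempty ∧ R.inf id = ∅) ∧ R.card = n}.Nonempty :=
    ⟨R0.card, R0, hR0, rfl⟩
  obtain ⟨R, hPR, hRcard⟩ := Nat.sInf_mem hsetne
  have hminR : ∀ R' : Finset (Finset V),
      (↑R' ⊆ Q ∧ R'.Nonempty ∧ R'.inf id = ∅) → R.card ≤ R'.card := by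
    intro R' h
    rw [hRcard]
    exact Nat.sInf_le ⟨R', h, rfl⟩
  obtain ⟨hRQ, hRne, hRinf⟩ := hPR
  have hmemQ : ∀ q ∈ R, q ∈ Q := fun q hq => hRQ (Finset.mem_coe.mpr hq)
  -- |R| ≥ 3
  have hcard1 : R.card ≠ 1 := by
    intro h
    obtain ⟨q, rfl⟩ := Finset.card_eq_one.mp h
    rw [Finset.inf_singleton] at hRinf
    obtain ⟨v, hv, -⟩ := hPI q (hmemQ q (by simp)) q (hmemQ q (by simp))
    rw [show id q = q from rfl] at hRinf
    rw [hRinf] at hv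
    simp at hv
  have hcard2 : R.card ≠ 2 := by
    intro h
    obtain ⟨q, r, hqr, rfl⟩ := Finset.card_eq_two.mp h
    rw [Finset.inf_insert, Finset.inf_singleton] at hRinf
    obtain ⟨v, hv, hv'⟩ := hPI q (hmemQ q (by simp)) r (hmemQ r (by simp))
    have : v ∈ (id q ⊓ id r : Finset V) := by
      simp only [id_eq, Finset.inf_eq_inter, Finset.mem_inter]
      exact ⟨hv, hv'⟩
    rw [hRinf] at this
    simp at this
  have hcard3 : 3 ≤ R.card := by
    have h0 : R.card ≠ 0 := by
      intro h
      rw [Finset.card_eq_zero] at h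
      exact Finset.not_nonempty_empty (h ▸ hRne)
    omega
  -- erased subfamilies have nonempty intersection
  have hinf_ne : ∀ q ∈ R, ((R.erase q).inf id).Nonempty := by
    intro q hq
    rw [Finset.nonempty_iff_ne_empty]
    intro hemp
    have hPe : (↑(R.erase q) : Set (Finset V)) ⊆ Q ∧ (R.erase q).Nonempty ∧
        (R.erase q).inf id = ∅ := by
      refine ⟨?_, ?_, hemp⟩
      · intro r hr
        exact hRQ (Finset.mem_coe.mpr
          (Finset.mem_of_mem_erase (Finset.mem_coe.mp hr)))
      · rw [← Finset.card_pos, Finset.card_erase_of_mem hq]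
        omega
    have := hminR _ hPe
    rw [Finset.card_erase_of_mem hq] at this
    omega
  have hex : ∀ q ∈ R, ∃ v, ∀ r ∈ R.erase q, v ∈ r := by
    intro q hq
    obtain ⟨v, hv⟩ := hinf_ne q hq
    exact ⟨v, fun r hr => hinfmem v _ r hr hv⟩
  choose f hf using hex
  have hfin : ∀ (q : Finset V) (hq : q ∈ R) (r : Finset V),
      r ∈ R → r ≠ q → f q hq ∈ r := by
    intro q hq r hr hne
    exact hf q hq r (Finset.mem_erase.mpr ⟨hne, hr⟩)
  have hfout : ∀ (q : Finset V) (hq : q ∈ R), f q hq ∉ q := by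
    intro q hq hmem
    have hall : ∀ r ∈ R, f q hq ∈ r := by
      intro r hr
      by_cases h : r = q
      · exact h ▸ hmem
      · exact hfin q hq r hr h
    have := hmeminf _ _ hall
    rw [hRinf] at this
    simp at this
  have hfne : ∀ (q : Finset V) (hq : q ∈ R) (q' : Finset V) (hq' : q' ∈ R),
      q ≠ q' → f q hq ≠ f q' hq' := by
    intro q hq q' hq' hne heq
    have h1 : f q hq ∈ q' := hfin q hq q' hq' (Ne.symm hne)
    rw [heq] at h1
    exact hfout q' hq' h1
  have hthird : ∀ q ∈ R, ∀ q' ∈ R, ∃ q'' ∈ R, q'' ≠ q ∧ q'' ≠ q' := by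
    intro q hq q' hq'
    have h1 : R.card - 2 ≤ ((R.erase q).erase q').card := by
      have h2 := Finset.pred_card_le_card_erase (s := R.erase q) (a := q')
      have h3 := Finset.pred_card_le_card_erase (s := R) (a := q)
      omega
    have h4 : ((R.erase q).erase q').Nonempty := by
      rw [← Finset.card_pos]
      omega
    obtain ⟨q'', hq''⟩ := h4
    rw [Finset.mem_erase, Finset.mem_erase] at hq''
    exact ⟨q'', hq''.2.2, hq''.2.1, hq''.1⟩
  -- the clique of chosen vertices
  set W : Finset V := R.attach.image (fun p => f p.1 p.2) with hW
  have hWmemf : ∀ (q : Finset V) (hq : q ∈ R), f q hq ∈ W := by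
    intro q hq
    rw [hW, Finset.mem_image]
    exact ⟨⟨q, hq⟩, Finset.mem_attach _ _, rfl⟩
  have hWel : ∀ u ∈ W, ∃ (q : Finset V) (hq : q ∈ R), f q hq = u := by
    intro u hu
    rw [hW, Finset.mem_image] at hu
    obtain ⟨p, -, hp⟩ := hu
    exact ⟨p.1, p.2, hp⟩
  have hWcard : W.card = R.card := by
    rw [hW, Finset.card_image_of_injOn, Finset.card_attach]
    intro p _ p' _ h
    by_contra hne
    have : p.1 ≠ p'.1 := fun h' => hne (Subtype.ext h')
    exact hfne p.1 p.2 p'.1 p'.2 this h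
  have hWclique : G.IsClique (W : Set V) := by
    intro u hu v hv huv
    obtain ⟨q, hq, rfl⟩ := hWel u (Finset.mem_coe.mp hu)
    obtain ⟨q', hq', rfl⟩ := hWel v (Finset.mem_coe.mp hv)
    have hne : q ≠ q' := by
      intro h
      subst h
      exact huv rfl
    obtain ⟨q'', hq'', h1, h2⟩ := hthird q hq q' hq'
    exact clique_adj G (hQmc q'' (hmemQ q'' hq'')).1
      (hfin q hq q'' hq'' h1) (hfin q' hq' q'' hq'' h2) huv
  have hW5 : W.card ≤ 5 := clique_card_le G hdeg hWclique
  have hcase : R.card = 3 ∨ R.card = 4 ∨ R.card = 5 := by omega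
  rcases hcase with h3 | h4 | h5
  · -- |R| = 3 : extract the triple
    obtain ⟨q1, q2, q3, h12, h13, h23, hReq⟩ := Finset.card_eq_three.mp h3
    have hq1 : q1 ∈ R := by rw [hReq]; simp
    have hq2 : q2 ∈ R := by rw [hReq]; simp
    have hq3 : q3 ∈ R := by rw [hReq]; simp
    refine ⟨q1, q2, q3, hmemQ q1 hq1, hmemQ q2 hq2, hmemQ q3 hq3,
      f q1 hq1, f q2 hq2, f q3 hq3,
      hfin q1 hq1 q2 hq2 (Ne.symm h12), hfin q1 hq1 q3 hq3 (Ne.symm h13),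
      hfout q1 hq1,
      hfin q2 hq2 q1 hq1 h12, hfin q2 hq2 q3 hq3 (Ne.symm h23),
      hfout q2 hq2,
      hfin q3 hq3 q1 hq1 h13, hfin q3 hq3 q2 hq2 h23,
      hfout q3 hq3, ?_⟩
    intro v ⟨h1, h2, h3'⟩
    have hall : ∀ r ∈ R, v ∈ r := by
      intro r hr
      rw [hReq] at hr
      simp only [Finset.mem_insert, Finset.mem_singleton] at hr
      rcases hr with rfl | rfl | rfl <;> assumption
    have := hmeminf _ _ hall
    rw [hRinf] at this
    simp at this
  · -- |R| = 4 : impossible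
    exfalso
    have hnotsub : ∀ (q : Finset V) (hq : q ∈ R), ∃ u ∈ q, u ∉ W := by
      intro q hq
      by_contra h
      push_neg at h
      have hsub : q ⊆ W := fun u hu => h u hu
      have heq := (hQmc q (hmemQ q hq)).2 W hWclique hsub
      exact hfout q hq (heq ▸ hWmemf q hq)
    choose g hg1 hg2 using hnotsub
    have hadj_vg : ∀ (q : Finset V) (hq : q ∈ R) (q' : Finset V) (hq' : q' ∈ R),
        q' ≠ q → G.Adj (f q' hq') (g q hq) := by
      intro q hq q' hq' hne
      have h1 : f q' hq' ∈ q := hfin q' hq' q hq (Ne.symm hne)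
      exact clique_adj G (hQmc q (hmemQ q hq)).1 h1 (hg1 q hq)
        (ne_of_mem_of_not_mem (hWmemf q' hq') (hg2 q hq))
    have hpin : ∀ (q : Finset V) (hq : q ∈ R) (q' : Finset V) (hq' : q' ∈ R),
        q' ≠ q → ∀ u, G.Adj (f q' hq') u → u ∈ insert (g q hq) W := by
      intro q hq q' hq' hne u hu
      by_contra huW
      have hune : u ≠ g q hq ∧ u ∉ W := by
        constructor
        · intro h; exact huW (h ▸ Finset.mem_insert_self _ _)
        · intro h; exact huW (Finset.mem_insert_of_mem h)
      have hsub : insert u (insert (g q hq) (W.erase (f q' hq'))) ⊆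
          G.neighborFinset (f q' hq') := by
        intro t ht
        rw [SimpleGraph.mem_neighborFinset]
        simp only [Finset.mem_insert] at ht
        rcases ht with rfl | rfl | ht
        · exact hu
        · exact hadj_vg q hq q' hq' hne
        · rw [Finset.mem_erase] at ht
          exact clique_adj G hWclique (hWmemf q' hq') ht.2 (Ne.symm ht.1)
      have hb := nbrs_bound G hdeg hsub
      have hc1 : (W.erase (f q' hq')).card = R.card - 1 := by
        rw [Finset.card_erase_of_mem (hWmemf q' hq'), hWcard]
      have hgne : g q hq ∉ W.erase (f q' hq') :=
        fun h => hg2 q hq (Finset.mem_of_mem_erase h)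
      have hune2 : u ∉ insert (g q hq) (W.erase (f q' hq')) := by
        simp only [Finset.mem_insert]
        push_neg
        exact ⟨hune.1, fun h => hune.2 (Finset.mem_of_mem_erase h)⟩
      rw [Finset.card_insert_of_notMem hune2,
        Finset.card_insert_of_notMem hgne, hc1] at hb
      omega
    have hgconst : ∀ (q : Finset V) (hq : q ∈ R) (q' : Finset V) (hq' : q' ∈ R),
        g q hq = g q' hq' := by
      intro q hq q' hq'
      by_cases hqq : q = q'
      · subst hqq; rfl
      · by_contra hne
        obtain ⟨q'', hq'', h1, h2⟩ := hthird q hq q' hq'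
        have h3 : G.Adj (f q'' hq'') (g q hq) := hadj_vg q hq q'' hq'' h1
        have h4 : G.Adj (f q'' hq'') (g q' hq') := hadj_vg q' hq' q'' hq'' h2
        have hsub : insert (g q hq) (insert (g q' hq') (W.erase (f q'' hq''))) ⊆
            G.neighborFinset (f q'' hq'') := by
          intro t ht
          rw [SimpleGraph.mem_neighborFinset]
          simp only [Finset.mem_insert] at ht
          rcases ht with rfl | rfl | ht
          · exact h3
          · exact h4
          · rw [Finset.mem_erase] at ht
            exact clique_adj G hWclique (hWmemf q'' hq'') ht.2 (Ne.symm ht.1)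
        have hb := nbrs_bound G hdeg hsub
        have hc1 : (W.erase (f q'' hq'')).card = R.card - 1 := by
          rw [Finset.card_erase_of_mem (hWmemf q'' hq''), hWcard]
        have hne1 : g q' hq' ∉ W.erase (f q'' hq'') :=
          fun h => hg2 q' hq' (Finset.mem_of_mem_erase h)
        have hne2 : g q hq ∉ insert (g q' hq') (W.erase (f q'' hq'')) := by
          simp only [Finset.mem_insert]
          push_neg
          exact ⟨hne, fun h => hg2 q hq (Finset.mem_of_mem_erase h)⟩
        rw [Finset.card_insert_of_notMem hne2,
          Finset.card_insert_of_notMem hne1, hc1] at hb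
        omega
    obtain ⟨qs, hqs⟩ := hRne
    have hwadj : ∀ v ∈ W, G.Adj v (g qs hqs) := by
      intro v hv
      obtain ⟨q'', hq'', rfl⟩ := hWel v hv
      obtain ⟨q, hqR, hne1, -⟩ := hthird q'' hq'' q'' hq''
      have := hadj_vg q hqR q'' hq'' (Ne.symm hne1)
      rwa [hgconst q hqR qs hqs] at this
    have hclins : G.IsClique (↑(insert (g qs hqs) W) : Set V) := by
      rw [Finset.coe_insert, SimpleGraph.isClique_insert]
      exact ⟨hWclique, fun b hb hne =>
        (hwadj b (Finset.mem_coe.mp hb)).symm⟩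
    have hfinal : ∀ (q : Finset V) (hq : q ∈ R), q ⊆ insert (g qs hqs) W := by
      intro q hq u hu
      obtain ⟨q'', hq'', h1, -⟩ := hthird q hq q hq
      have hvq : f q'' hq'' ∈ q := hfin q'' hq'' q hq (Ne.symm h1)
      by_cases huv : u = f q'' hq''
      · exact Finset.mem_insert_of_mem (huv ▸ hWmemf q'' hq'')
      · have hadj : G.Adj (f q'' hq'') u :=
          clique_adj G (hQmc q (hmemQ q hq)).1 hvq hu (Ne.symm huv)
        have := hpin q hq q'' hq'' h1 u hadj
        rwa [hgconst q hq qs hqs] at this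
    have heq := (hQmc qs (hmemQ qs hqs)).2 _ hclins (hfinal qs hqs)
    have hmem : f qs hqs ∈ insert (g qs hqs) W :=
      Finset.mem_insert_of_mem (hWmemf qs hqs)
    rw [← heq] at hmem
    exact hfout qs hqs hmem
  · -- |R| = 5 : impossible
    exfalso
    obtain ⟨q, hq⟩ := hRne
    obtain ⟨q'', hq'', h1, -⟩ := hthird q hq q hq
    have hwq : f q'' hq'' ∈ q := hfin q'' hq'' q hq (Ne.symm h1)
    have hqW : q ⊆ W := by
      intro u hu
      by_contra huW
      have huw : u ≠ f q'' hq'' := fun h => huW (h ▸ hWmemf q'' hq'')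
      have hadj : G.Adj (f q'' hq'') u :=
        clique_adj G (hQmc q (hmemQ q hq)).1 hwq hu (Ne.symm huw)
      have hsub : insert u (W.erase (f q'' hq'')) ⊆
          G.neighborFinset (f q'' hq'') := by
        intro t ht
        rw [SimpleGraph.mem_neighborFinset]
        simp only [Finset.mem_insert] at ht
        rcases ht with rfl | ht
        · exact hadj
        · rw [Finset.mem_erase] at ht
          exact clique_adj G hWclique (hWmemf q'' hq'') ht.2 (Ne.symm ht.1)
      have hb := nbrs_bound G hdeg hsub
      have hc1 : (W.erase (f q'' hq'')).card = R.card - 1 := by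
        rw [Finset.card_erase_of_mem (hWmemf q'' hq''), hWcard]
      have hune : u ∉ W.erase (f q'' hq'') :=
        fun h => huW (Finset.mem_of_mem_erase h)
      rw [Finset.card_insert_of_notMem hune, hc1] at hb
      omega
    have heq := (hQmc q (hmemQ q hq)).2 W hWclique hqW
    exact hfout q hq (heq ▸ hWmemf q hq)


lemma two_of_three (hconn : G.Connected) (hdeg : ∀ v, G.degree v ≤ 4)
    (hoct : ¬ Nonempty (G ≃g octahedron)) {Q : Set (Finset V)}
    (hQmc : ∀ q ∈ Q, MaxClique G q) (hPI : PairwiseIntersecting Q)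
    {q1 q2 q3 : Finset V} (h1 : q1 ∈ Q) (h2 : q2 ∈ Q) (h3 : q3 ∈ Q)
    {a b c : V} (ha2 : a ∈ q2) (ha3 : a ∈ q3) (ha1 : a ∉ q1)
    (hb1 : b ∈ q1) (hb3 : b ∈ q3) (hb2 : b ∉ q2)
    (hc1 : c ∈ q1) (hc2 : c ∈ q2) (hc3 : c ∉ q3)
    (hemp : ∀ v, ¬(v ∈ q1 ∧ v ∈ q2 ∧ v ∈ q3))
    {q : Finset V} (hqQ : q ∈ Q) :
    (a ∈ q ∧ b ∈ q) ∨ (a ∈ q ∧ c ∈ q) ∨ (b ∈ q ∧ c ∈ q) := by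
  classical
  by_contra hcon
  push_neg at hcon
  have hab : a ≠ b := fun h => hb2 (h ▸ ha2)
  have hac : a ≠ c := fun h => hc3 (h ▸ ha3)
  have hbc : b ≠ c := fun h => hc3 (h ▸ hb3)
  have hAab : G.Adj a b := clique_adj G (hQmc q3 h3).1 ha3 hb3 hab
  have hAac : G.Adj a c := clique_adj G (hQmc q2 h2).1 ha2 hc2 hac
  have hAbc : G.Adj b c := clique_adj G (hQmc q1 h1).1 hb1 hc1 hbc
  by_cases haq : a ∈ q
  · have hbq : b ∉ q := hcon.1 haq
    have hcq : c ∉ q := hcon.2.1 haq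
    obtain ⟨x, hxq, hx1⟩ := hPI q hqQ q1 h1
    exact caseII G hdeg (hQmc q hqQ) (hQmc q1 h1) hAab hAac hbc haq hbq hcq
      hb1 hc1 ha1 hxq hx1
  · by_cases hbq : b ∈ q
    · have hcq : c ∉ q := hcon.2.2 hbq
      obtain ⟨x, hxq, hx2⟩ := hPI q hqQ q2 h2
      exact caseII G hdeg (hQmc q hqQ) (hQmc q2 h2) hAab.symm hAbc hac hbq haq
        hcq ha2 hc2 hb2 hxq hx2
    · by_cases hcq : c ∈ q
      · obtain ⟨x, hxq, hx3⟩ := hPI q hqQ q3 h3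
        exact caseII G hdeg (hQmc q hqQ) (hQmc q3 h3) hAac.symm hAbc.symm hab
          hcq haq hbq ha3 hb3 hc3 hxq hx3
      · -- no vertex of the triangle in q
        obtain ⟨x, hxq, hx1⟩ := hPI q hqQ q1 h1
        obtain ⟨y, hyq, hy2⟩ := hPI q hqQ q2 h2
        obtain ⟨z, hzq, hz3⟩ := hPI q hqQ q3 h3
        by_cases hxy : x = y
        · subst hxy
          by_cases hxz : x = z
          · subst hxz
            exact hemp x ⟨hx1, hy2, hz3⟩
          · have hwa : G.Adj x a := clique_adj G (hQmc q2 h2).1 hy2 ha2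
              (ne_of_mem_of_not_mem hxq haq)
            have hwb : G.Adj x b := clique_adj G (hQmc q1 h1).1 hx1 hb1
              (ne_of_mem_of_not_mem hxq hbq)
            have hwc : G.Adj x c := clique_adj G (hQmc q1 h1).1 hx1 hc1
              (ne_of_mem_of_not_mem hxq hcq)
            have hms : G.Adj a z := clique_adj G (hQmc q3 h3).1 ha3 hz3
              (Ne.symm (ne_of_mem_of_not_mem hzq haq))
            exact caseI_sub G hdeg (hQmc q hqQ) hxq hzq
              (fun h => hxz h.symm) hwa hwb hwc haq hbq hcq hab hac hbc haq
              hms hwa.symm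
        · by_cases hxz : x = z
          · subst hxz
            have hwa : G.Adj x a := clique_adj G (hQmc q3 h3).1 hz3 ha3
              (ne_of_mem_of_not_mem hxq haq)
            have hwb : G.Adj x b := clique_adj G (hQmc q1 h1).1 hx1 hb1
              (ne_of_mem_of_not_mem hxq hbq)
            have hwc : G.Adj x c := clique_adj G (hQmc q1 h1).1 hx1 hc1
              (ne_of_mem_of_not_mem hxq hcq)
            have hms : G.Adj a y := clique_adj G (hQmc q2 h2).1 ha2 hy2
              (Ne.symm (ne_of_mem_of_not_mem hyq haq))
            exact caseI_sub G hdeg (hQmc q hqQ) hxq hyq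
              (fun h => hxy h.symm) hwa hwb hwc haq hbq hcq hab hac hbc haq
              hms hwa.symm
          · by_cases hyz : y = z
            · subst hyz
              have hwa : G.Adj y a := clique_adj G (hQmc q2 h2).1 hy2 ha2
                (ne_of_mem_of_not_mem hyq haq)
              have hwb : G.Adj y b := clique_adj G (hQmc q3 h3).1 hz3 hb3
                (ne_of_mem_of_not_mem hyq hbq)
              have hwc : G.Adj y c := clique_adj G (hQmc q2 h2).1 hy2 hc2
                (ne_of_mem_of_not_mem hyq hcq)
              have hms : G.Adj b x := clique_adj G (hQmc q1 h1).1 hb1 hx1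
                (Ne.symm (ne_of_mem_of_not_mem hxq hbq))
              exact caseI_sub G hdeg (hQmc q hqQ) hyq hxq hxy hwa hwb hwc
                haq hbq hcq hab hac hbc hbq hms hwb.symm
            · -- all distinct: octahedron
              refine hoct (octa_iso G hconn hdeg (x := x) (y := y) (z := z)
                hAab hAac hAbc ?_ ?_ ?_ ?_ ?_ ?_ ?_ ?_ ?_ ?_ ?_ ?_)
              · exact clique_adj G (hQmc q1 h1).1 hx1 hb1
                  (ne_of_mem_of_not_mem hxq hbq)
              · exact clique_adj G (hQmc q1 h1).1 hx1 hc1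
                  (ne_of_mem_of_not_mem hxq hcq)
              · exact clique_adj G (hQmc q2 h2).1 hy2 ha2
                  (ne_of_mem_of_not_mem hyq haq)
              · exact clique_adj G (hQmc q2 h2).1 hy2 hc2
                  (ne_of_mem_of_not_mem hyq hcq)
              · exact clique_adj G (hQmc q3 h3).1 hz3 ha3
                  (ne_of_mem_of_not_mem hzq haq)
              · exact clique_adj G (hQmc q3 h3).1 hz3 hb3
                  (ne_of_mem_of_not_mem hzq hbq)
              · exact clique_adj G (hQmc q hqQ).1 hxq hyq hxy
              · exact clique_adj G (hQmc q hqQ).1 hxq hzq hxz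
              · exact clique_adj G (hQmc q hqQ).1 hyq hzq hyz
              · exact ne_of_mem_of_not_mem hxq haq
              · exact ne_of_mem_of_not_mem hyq hbq
              · exact ne_of_mem_of_not_mem hzq hcq

lemma stepIII (hdeg : ∀ v, G.degree v ≤ 4) {Q : Set (Finset V)}
    (hQmc : ∀ q ∈ Q, MaxClique G q) (hmiss : ∀ v : V, ∃ q ∈ Q, v ∉ q)
    {a b c d : V}
    (hAab : G.Adj a b) (hAac : G.Adj a c) (hAbc : G.Adj b c)
    (hda : G.Adj d a) (hdb : G.Adj d b) (hdc : G.Adj d c)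
    (hkey : ∀ q ∈ Q, (a ∈ q ∧ b ∈ q) ∨ (a ∈ q ∧ c ∈ q) ∨ (b ∈ q ∧ c ∈ q))
    {q : Finset V} (hqQ : q ∈ Q) (hbq : b ∈ q) (hcq : c ∈ q) (hdq : d ∉ q) :
    False := by
  classical
  by_cases haq : a ∈ q
  · -- the 4th vertex v of q, not adjacent to d
    obtain ⟨v, hvq, hdv⟩ := maxclique_missing G (hQmc q hqQ) hdq
    have hva : v ≠ a := fun h => hdv (h ▸ hda)
    have hvb : v ≠ b := fun h => hdv (h ▸ hdb)
    have hvc : v ≠ c := fun h => hdv (h ▸ hdc)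
    have hdv' : d ≠ v := Ne.symm (ne_of_mem_of_not_mem hvq hdq)
    have hAav : G.Adj a v := clique_adj G (hQmc q hqQ).1 haq hvq (Ne.symm hva)
    have hAbv : G.Adj b v := clique_adj G (hQmc q hqQ).1 hbq hvq (Ne.symm hvb)
    have hAcv : G.Adj c v := clique_adj G (hQmc q hqQ).1 hcq hvq (Ne.symm hvc)
    have hpinb : ∀ u, G.Adj b u → u = a ∨ u = c ∨ u = d ∨ u = v := by
      intro u hu
      by_contra h
      push_neg at h
      obtain ⟨u1, u2, u3, u4⟩ := h
      exact five_nbrs G hdeg hAab.symm hAbc hdb.symm hAbv hu hAac.ne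
        hda.ne.symm hva.symm (Ne.symm u1) hdc.ne.symm hvc.symm (Ne.symm u2)
        hdv' (Ne.symm u3) (Ne.symm u4)
    obtain ⟨q', hq'Q, haq'⟩ := hmiss a
    have hbcq' : b ∈ q' ∧ c ∈ q' := by
      rcases hkey q' hq'Q with h | h | h
      · exact absurd h.1 haq'
      · exact absurd h.1 haq'
      · exact h
    have hall : ∀ u ∈ q', G.Adj a u := by
      intro u hu
      by_cases hub : u = b
      · exact hub ▸ hAab
      · have hAbu : G.Adj b u := clique_adj G (hQmc q' hq'Q).1 hbcq'.1 hu
          (Ne.symm hub)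
        rcases hpinb u hAbu with rfl | rfl | rfl | rfl
        · exact absurd hu haq'
        · exact hAac
        · exact hda.symm
        · exact hAav
    have hcl : G.IsClique (↑(insert a q') : Set V) := by
      rw [Finset.coe_insert, SimpleGraph.isClique_insert]
      exact ⟨(hQmc q' hq'Q).1, fun u hu _ => hall u (Finset.mem_coe.mp hu)⟩
    have heq := (hQmc q' hq'Q).2 _ hcl (Finset.subset_insert _ _)
    exact haq' (heq ▸ Finset.mem_insert_self a q')
  · -- q misses a; it has a vertex g not adjacent to a
    obtain ⟨g, hgq, hag⟩ := maxclique_missing G (hQmc q hqQ) haq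
    have hgb : g ≠ b := fun h => hag (h ▸ hAab)
    have hgc : g ≠ c := fun h => hag (h ▸ hAac)
    have hgd : g ≠ d := fun h => hag (h ▸ hda.symm)
    have hga : a ≠ g := Ne.symm (ne_of_mem_of_not_mem hgq haq)
    have hAbg : G.Adj b g := clique_adj G (hQmc q hqQ).1 hbq hgq (Ne.symm hgb)
    have hAcg : G.Adj c g := clique_adj G (hQmc q hqQ).1 hcq hgq (Ne.symm hgc)
    have hpinb : ∀ u, G.Adj b u → u = a ∨ u = c ∨ u = d ∨ u = g := by
      intro u hu
      by_contra h
      push_neg at h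
      obtain ⟨u1, u2, u3, u4⟩ := h
      exact five_nbrs G hdeg hAab.symm hAbc hdb.symm hAbg hu hAac.ne
        hda.ne.symm hga (Ne.symm u1) hdc.ne.symm hgc.symm (Ne.symm u2)
        hgd.symm (Ne.symm u3) (Ne.symm u4)
    obtain ⟨q', hq'Q, hcq'⟩ := hmiss c
    have habq' : a ∈ q' ∧ b ∈ q' := by
      rcases hkey q' hq'Q with h | h | h
      · exact h
      · exact absurd h.2 hcq'
      · exact absurd h.2 hcq'
    have hall : ∀ u ∈ q', G.Adj c u := by
      intro u hu
      by_cases hub : u = b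
      · exact hub ▸ hAbc.symm
      · have hAbu : G.Adj b u := clique_adj G (hQmc q' hq'Q).1 habq'.2 hu
          (Ne.symm hub)
        rcases hpinb u hAbu with rfl | rfl | rfl | rfl
        · exact hAac.symm
        · exact absurd hu hcq'
        · exact hdc.symm
        · exact hAcg
    have hcl : G.IsClique (↑(insert c q') : Set V) := by
      rw [Finset.coe_insert, SimpleGraph.isClique_insert]
      exact ⟨(hQmc q' hq'Q).1, fun u hu _ => hall u (Finset.mem_coe.mp hu)⟩
    have heq := (hQmc q' hq'Q).2 _ hcl (Finset.subset_insert _ _)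
    exact hcq' (heq ▸ Finset.mem_insert_self c q')

end Aux

set_option maxHeartbeats 3200000

theorem stmt7 {V : Type u} [Fintype V] [DecidableEq V] (G : SimpleGraph V)
    [DecidableRel G.Adj] (hconn : G.Connected) (hdeg : ∀ v, G.degree v ≤ 4)
    (hoct : ¬ Nonempty (G ≃g octahedron))
    (Q : Set (Finset V)) (hQ : IsNecktie G Q) :
    ∃ T : Finset V, IsInnerTriangle G T ∧ Q = QT G T := by
  classical
  have hQmc := hQ.1.1
  have hPI := hQ.1.2.1
  have hQmax := hQ.1.2.2
  have hniv := hQ.2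
  have hmiss : ∀ v : V, ∃ q ∈ Q, v ∉ q := by
    have h := hniv; push_neg at h; exact h
  have hVne : Nonempty V := hconn.nonempty
  obtain ⟨v0⟩ := hVne
  have hQne : ∃ q0, q0 ∈ Q := by
    by_contra h
    push_neg at h
    obtain ⟨qq, hqq, hvqq⟩ := exists_maxclique G {v0} (by simp)
    have heq := hQmax {qq} (fun x hx => absurd hx (h x)) ?_ ?_
    · exact h qq (heq ▸ rfl)
    · intro r hr
      rw [Set.mem_singleton_iff] at hr
      exact hr ▸ hqq
    · intro r hr s hs
      rw [Set.mem_singleton_iff] at hr hs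
      subst hr; subst hs
      exact ⟨v0, hvqq (by simp), hvqq (by simp)⟩
  obtain ⟨q0, hq0⟩ := hQne
  obtain ⟨q1, q2, q3, h1, h2, h3, a, b, c, ha2, ha3, ha1, hb1, hb3, hb2,
    hc1, hc2, hc3, hemp⟩ := necktie_triple G hdeg hQ hq0
  have hab : a ≠ b := fun h => hb2 (h ▸ ha2)
  have hac : a ≠ c := fun h => hc3 (h ▸ ha3)
  have hbc : b ≠ c := fun h => hc3 (h ▸ hb3)
  have hAab : G.Adj a b := clique_adj G (hQmc q3 h3).1 ha3 hb3 hab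
  have hAac : G.Adj a c := clique_adj G (hQmc q2 h2).1 ha2 hc2 hac
  have hAbc : G.Adj b c := clique_adj G (hQmc q1 h1).1 hb1 hc1 hbc
  set T : Finset V := {a, b, c} with hT
  have haT : a ∈ T := by simp [hT]
  have hbT : b ∈ T := by simp [hT]
  have hcT : c ∈ T := by simp [hT]
  have hTcard : T.card = 3 := by
    rw [hT, Finset.card_insert_of_notMem (by simp [hab, hac]),
      Finset.card_insert_of_notMem (by simp [hbc]), Finset.card_singleton]
  have hkey : ∀ q ∈ Q, (a ∈ q ∧ b ∈ q) ∨ (a ∈ q ∧ c ∈ q) ∨ (b ∈ q ∧ c ∈ q) :=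
    fun q hq => two_of_three G hconn hdeg hoct hQmc hPI h1 h2 h3 ha2 ha3 ha1
      hb1 hb3 hb2 hc1 hc2 hc3 hemp hq
  have hsub : Q ⊆ QT G T := by
    intro q hq
    refine ⟨hQmc q hq, ?_⟩
    have hpair : ∃ u v : V, u ≠ v ∧ u ∈ q ∩ T ∧ v ∈ q ∩ T := by
      rcases hkey q hq with ⟨h1', h2'⟩ | ⟨h1', h2'⟩ | ⟨h1', h2'⟩
      · exact ⟨a, b, hab, Finset.mem_inter.mpr ⟨h1', haT⟩,
          Finset.mem_inter.mpr ⟨h2', hbT⟩⟩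
      · exact ⟨a, c, hac, Finset.mem_inter.mpr ⟨h1', haT⟩,
          Finset.mem_inter.mpr ⟨h2', hcT⟩⟩
      · exact ⟨b, c, hbc, Finset.mem_inter.mpr ⟨h1', hbT⟩,
          Finset.mem_inter.mpr ⟨h2', hcT⟩⟩
    obtain ⟨u, v, huv, hu, hv⟩ := hpair
    have hsub2 : ({u, v} : Finset V) ⊆ q ∩ T := by
      intro t ht
      simp only [Finset.mem_insert, Finset.mem_singleton] at ht
      rcases ht with rfl | rfl
      exacts [hu, hv]
    have h2c : ({u, v} : Finset V).card = 2 := Finset.card_pair huv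
    exact h2c ▸ Finset.card_le_card hsub2
  have hQTmc : ∀ q' ∈ QT G T, MaxClique G q' := fun q' hq' => hq'.1
  have hQTPI : PairwiseIntersecting (QT G T) := by
    intro q hq r hr
    have hqT := hq.2
    have hrT := hr.2
    have hsub2 : (q ∩ T) ∪ (r ∩ T) ⊆ T := by
      intro u hu
      rcases Finset.mem_union.mp hu with h | h
      exacts [(Finset.mem_inter.mp h).2, (Finset.mem_inter.mp h).2]
    have hcardu := Finset.card_union_add_card_inter (q ∩ T) (r ∩ T)
    have hle : ((q ∩ T) ∪ (r ∩ T)).card ≤ 3 :=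
      hTcard ▸ Finset.card_le_card hsub2
    have hpos : 0 < ((q ∩ T) ∩ (r ∩ T)).card := by omega
    obtain ⟨v, hv⟩ := Finset.card_pos.mp hpos
    rw [Finset.mem_inter] at hv
    exact ⟨v, (Finset.mem_inter.mp hv.1).1, (Finset.mem_inter.mp hv.2).1⟩
  have hQT : Q = QT G T := (hQmax _ hsub hQTmc hQTPI).symm
  have hTclique : G.IsClique (T : Set V) := by
    intro u hu v hv huv
    rw [hT] at hu hv
    simp only [Finset.coe_insert, Set.mem_insert_iff, Finset.coe_singleton,
      Set.mem_singleton_iff] at hu hv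
    rcases hu with rfl | rfl | rfl <;> rcases hv with rfl | rfl | rfl <;>
      first
        | exact absurd rfl huv
        | exact hAab | exact hAac | exact hAbc
        | exact hAab.symm | exact hAac.symm | exact hAbc.symm
  have hTmax : MaxClique G T := by
    refine ⟨hTclique, ?_⟩
    intro t ht hsubT
    by_contra hne
    have hss : T ⊂ t := ⟨hsubT, fun h => hne (Finset.Subset.antisymm hsubT h)⟩
    obtain ⟨d, hdt, hdT⟩ := Finset.exists_of_ssubset hss
    have hda : G.Adj d a := clique_adj G ht hdt (hsubT haT)
      (fun h => hdT (h ▸ haT))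
    have hdb : G.Adj d b := clique_adj G ht hdt (hsubT hbT)
      (fun h => hdT (h ▸ hbT))
    have hdc : G.Adj d c := clique_adj G ht hdt (hsubT hcT)
      (fun h => hdT (h ▸ hcT))
    obtain ⟨q, hqQ, hdq⟩ := hmiss d
    rcases hkey q hqQ with ⟨hq1', hq2'⟩ | ⟨hq1', hq2'⟩ | ⟨hq1', hq2'⟩
    · exact stepIII G hdeg hQmc hmiss hAac.symm hAbc.symm hAab hdc hda hdb
        (fun q' hq' => by rcases hkey q' hq' with h | h | h <;> tauto)
        hqQ hq1' hq2' hdq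
    · exact stepIII G hdeg hQmc hmiss hAab.symm hAbc hAac hdb hda hdc
        (fun q' hq' => by rcases hkey q' hq' with h | h | h <;> tauto)
        hqQ hq1' hq2' hdq
    · exact stepIII G hdeg hQmc hmiss hAab hAac hAbc hda hdb hdc hkey
        hqQ hq1' hq2' hdq
  have hedge : ∀ x y z : V, T = {x, y, z} → x ≠ y → x ≠ z → y ≠ z →
      G.Adj x y → G.Adj z x → G.Adj z y →
      (∀ q' ∈ Q, z ∉ q' → x ∈ q' ∧ y ∈ q') →
      ∃ T' : Finset V, IsTriangle G T' ∧ T' ≠ T ∧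
        T ∩ T' = ({x, y} : Finset V) := by
    intro x y z hTxyz hxy hxz hyz hAxy hAzx hAzy hpairq
    obtain ⟨q, hqQ, hzq⟩ := hmiss z
    obtain ⟨hxq, hyq⟩ := hpairq q hqQ hzq
    have hw : ∃ w ∈ q, w ≠ x ∧ w ≠ y := by
      by_contra h
      push_neg at h
      have hcl : G.IsClique (↑(insert z q) : Set V) := by
        rw [Finset.coe_insert, SimpleGraph.isClique_insert]
        refine ⟨(hQmc q hqQ).1, fun u hu _ => ?_⟩
        rcases em (u = x) with rfl | hux
        · exact hAzx
        · have huy := h u (Finset.mem_coe.mp hu) hux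
          exact huy ▸ hAzy
      have heq := (hQmc q hqQ).2 _ hcl (Finset.subset_insert _ _)
      exact hzq (heq ▸ Finset.mem_insert_self z q)
    obtain ⟨w, hwq, hwx, hwy⟩ := hw
    have hwz : w ≠ z := ne_of_mem_of_not_mem hwq hzq
    have hwT : w ∉ T := by
      rw [hTxyz]
      simp only [Finset.mem_insert, Finset.mem_singleton]
      push_neg
      exact ⟨hwx, hwy, hwz⟩
    have hAxw : G.Adj x w := clique_adj G (hQmc q hqQ).1 hxq hwq (Ne.symm hwx)
    have hAyw : G.Adj y w := clique_adj G (hQmc q hqQ).1 hyq hwq (Ne.symm hwy)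
    refine ⟨{x, y, w}, ⟨?_, ?_⟩, ?_, ?_⟩
    · intro u hu v hv huv
      simp only [Finset.coe_insert, Set.mem_insert_iff, Finset.coe_singleton,
        Set.mem_singleton_iff] at hu hv
      rcases hu with rfl | rfl | rfl <;> rcases hv with rfl | rfl | rfl <;>
        first
          | exact absurd rfl huv
          | exact hAxy | exact hAxw | exact hAyw
          | exact hAxy.symm | exact hAxw.symm | exact hAyw.symm
    · rw [Finset.card_insert_of_notMem (by simp [hxy, Ne.symm hwx]),
        Finset.card_insert_of_notMem (by simp [Ne.symm hwy]),
        Finset.card_singleton]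
    · intro h
      exact hwT (h ▸ (by simp : w ∈ ({x, y, w} : Finset V)))
    · rw [hTxyz]
      ext u
      simp only [Finset.mem_inter, Finset.mem_insert, Finset.mem_singleton]
      constructor
      · rintro ⟨h1 | h1 | h1, h2 | h2 | h2⟩ <;> subst_vars <;> tauto
      · rintro (rfl | rfl)
        · exact ⟨Or.inl rfl, Or.inl rfl⟩
        · exact ⟨Or.inr (Or.inl rfl), Or.inr (Or.inl rfl)⟩
  refine ⟨T, ⟨hTmax, hTcard, ?_⟩, hQT⟩
  intro x hx y hy hxy
  rw [hT] at hx hy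
  simp only [Finset.mem_insert, Finset.mem_singleton] at hx hy
  rcases hx with rfl | rfl | rfl <;> rcases hy with rfl | rfl | rfl
  · exact absurd rfl hxy
  · exact hedge x y c (by rw [hT]) hab hac hbc hAab hAac.symm hAbc.symm
      (fun q' hq' hzq' => by rcases hkey q' hq' with h | h | h <;> tauto)
  · exact hedge x y b (by rw [hT]; ext u; simp; tauto) hac hab hbc.symm hAac
      hAab.symm hAbc
      (fun q' hq' hzq' => by rcases hkey q' hq' with h | h | h <;> tauto)
  · exact hedge x y c (by rw [hT]; ext u; simp; tauto) hab.symm hbc hac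
      hAab.symm hAbc.symm hAac.symm
      (fun q' hq' hzq' => by rcases hkey q' hq' with h | h | h <;> tauto)
  · exact absurd rfl hxy
  · exact hedge x y a (by rw [hT]; ext u; simp; tauto) hbc hab.symm hac.symm
      hAbc hAab hAac
      (fun q' hq' hzq' => by rcases hkey q' hq' with h | h | h <;> tauto)
  · exact hedge x y b (by rw [hT]; ext u; simp; tauto) hac.symm hbc.symm hab
      hAac.symm hAbc hAab.symm
      (fun q' hq' hzq' => by rcases hkey q' hq' with h | h | h <;> tauto)
  · exact hedge x y a (by rw [hT]; ext u; simp; tauto) hbc.symm hac.symm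
      hab.symm hAbc.symm hAac hAab
      (fun q' hq' hzq' => by rcases hkey q' hq' with h | h | h <;> tauto)
  · exact absurd rfl hxy
end

section
/- Let G be a connected graph with maximum degree at most 4, not the octahedron. If T and T' are triangles of G with T ∩ T' = {x} and T is an inner triangle, then the neighborhood N(x) induces a 4-cycle in G. -/
universe u

variable {V : Type u}

lemma inner_edge [DecidableEq V] {G : SimpleGraph V} {T : Finset V}
    (hT : IsInnerTriangle G T) {p q : V} (hp : p ∈ T) (hq : q ∈ T) (hpq : p ≠ q) :
    ∃ w, w ∉ T ∧ G.Adj p w ∧ G.Adj q w := by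
  obtain ⟨T2, hT2tri, hT2ne, hT2int⟩ := hT.2.2 p hp q hq hpq
  have hsub : ({p, q} : Finset V) ⊆ T2 := by
    rw [← hT2int]; exact Finset.inter_subset_right
  have hcard2 : ({p, q} : Finset V).card = 2 := Finset.card_pair hpq
  have h1 : (T2 \ ({p, q} : Finset V)).card = 1 := by
    rw [Finset.card_sdiff_of_subset hsub, hT2tri.2, hcard2]
  obtain ⟨w, hw⟩ := Finset.card_eq_one.mp h1
  have hwmem : w ∈ T2 \ ({p, q} : Finset V) := by rw [hw]; exact Finset.mem_singleton_self w
  rw [Finset.mem_sdiff, Finset.mem_insert, Finset.mem_singleton] at hwmem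
  obtain ⟨hwT2, hwpq⟩ := hwmem
  push_neg at hwpq
  refine ⟨w, ?_, ?_, ?_⟩
  · intro hwT
    have : w ∈ T ∩ T2 := Finset.mem_inter.mpr ⟨hwT, hwT2⟩
    rw [hT2int, Finset.mem_insert, Finset.mem_singleton] at this
    tauto
  · exact hT2tri.1 (Finset.mem_coe.mpr (hsub (by simp))) (Finset.mem_coe.mpr hwT2) (Ne.symm hwpq.1)
  · exact hT2tri.1 (Finset.mem_coe.mpr (hsub (by simp))) (Finset.mem_coe.mpr hwT2) (Ne.symm hwpq.2)

set_option maxHeartbeats 1000000 in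
theorem stmt8 {V : Type u} [Fintype V] [DecidableEq V] (G : SimpleGraph V)
    [DecidableRel G.Adj] (hconn : G.Connected) (hdeg : ∀ v, G.degree v ≤ 4)
    (hoct : ¬ Nonempty (G ≃g octahedron))
    (T T' : Finset V) (x : V)
    (hT : IsInnerTriangle G T) (hT' : IsTriangle G T')
    (hx : T ∩ T' = ({x} : Finset V)) :
    InducesC4 G (G.neighborFinset x) := by
  have hclqT : G.IsClique (T : Set V) := hT.1.1
  have hmaxT : ∀ t : Finset V, G.IsClique (t : Set V) → T ⊆ t → T = t := hT.1.2
  have hcardT : T.card = 3 := hT.2.1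
  have hxTT' : x ∈ T ∩ T' := by rw [hx]; exact Finset.mem_singleton_self x
  have hxT : x ∈ T := (Finset.mem_inter.mp hxTT').1
  have hxT' : x ∈ T' := (Finset.mem_inter.mp hxTT').2
  -- extract a, b
  have h2 : (T.erase x).card = 2 := by rw [Finset.card_erase_of_mem hxT, hcardT]
  obtain ⟨a, b, hab, hTe⟩ := Finset.card_eq_two.mp h2
  have haE : a ∈ T.erase x := by rw [hTe]; simp
  have hbE : b ∈ T.erase x := by rw [hTe]; simp
  have haT : a ∈ T := Finset.mem_of_mem_erase haE
  have hbT : b ∈ T := Finset.mem_of_mem_erase hbE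
  have hax : a ≠ x := Finset.ne_of_mem_erase haE
  have hbx : b ≠ x := Finset.ne_of_mem_erase hbE
  have hTeq : T = ({x, a, b} : Finset V) := by
    rw [← Finset.insert_erase hxT, hTe]
  -- extract u, v
  have h2' : (T'.erase x).card = 2 := by rw [Finset.card_erase_of_mem hxT', hT'.2]
  obtain ⟨u, v, huv, hTe'⟩ := Finset.card_eq_two.mp h2'
  have huE : u ∈ T'.erase x := by rw [hTe']; simp
  have hvE : v ∈ T'.erase x := by rw [hTe']; simp
  have huT' : u ∈ T' := Finset.mem_of_mem_erase huE
  have hvT' : v ∈ T' := Finset.mem_of_mem_erase hvE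
  have hux : u ≠ x := Finset.ne_of_mem_erase huE
  have hvx : v ≠ x := Finset.ne_of_mem_erase hvE
  have huT : u ∉ T := by
    intro h
    have : u ∈ T ∩ T' := Finset.mem_inter.mpr ⟨h, huT'⟩
    rw [hx, Finset.mem_singleton] at this; exact hux this
  have hvT : v ∉ T := by
    intro h
    have : v ∈ T ∩ T' := Finset.mem_inter.mpr ⟨h, hvT'⟩
    rw [hx, Finset.mem_singleton] at this; exact hvx this
  have hau : a ≠ u := fun h => huT (h ▸ haT)
  have hav : a ≠ v := fun h => hvT (h ▸ haT)
  have hbu : b ≠ u := fun h => huT (h ▸ hbT)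
  have hbv : b ≠ v := fun h => hvT (h ▸ hbT)
  -- adjacencies
  have hxa : G.Adj x a := hclqT (Finset.mem_coe.mpr hxT) (Finset.mem_coe.mpr haT) (Ne.symm hax)
  have hxb : G.Adj x b := hclqT (Finset.mem_coe.mpr hxT) (Finset.mem_coe.mpr hbT) (Ne.symm hbx)
  have hadjab : G.Adj a b := hclqT (Finset.mem_coe.mpr haT) (Finset.mem_coe.mpr hbT) hab
  have hxu : G.Adj x u := hT'.1 (Finset.mem_coe.mpr hxT') (Finset.mem_coe.mpr huT') (Ne.symm hux)
  have hxv : G.Adj x v := hT'.1 (Finset.mem_coe.mpr hxT') (Finset.mem_coe.mpr hvT') (Ne.symm hvx)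
  have hadjuv : G.Adj u v := hT'.1 (Finset.mem_coe.mpr huT') (Finset.mem_coe.mpr hvT') huv
  -- N(x) = {a, b, u, v}
  have hNsub : ({a, b, u, v} : Finset V) ⊆ G.neighborFinset x := by
    intro m hm
    rw [SimpleGraph.mem_neighborFinset]
    simp only [Finset.mem_insert, Finset.mem_singleton] at hm
    rcases hm with rfl | rfl | rfl | rfl
    exacts [hxa, hxb, hxu, hxv]
  have hN4 : ({a, b, u, v} : Finset V).card = 4 := by
    rw [Finset.card_insert_of_notMem (by simp [hab, hau, hav]),
        Finset.card_insert_of_notMem (by simp [hbu, hbv]),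
        Finset.card_insert_of_notMem (by simp [huv]), Finset.card_singleton]
  have hNx : G.neighborFinset x = ({a, b, u, v} : Finset V) := by
    refine (Finset.eq_of_subset_of_card_le hNsub ?_).symm
    rw [hN4]
    exact hdeg x
  -- if w ∉ T is adjacent to x, a, b then contradiction with maximality
  have hquad : ∀ w, w ∉ T → G.Adj x w → G.Adj a w → G.Adj b w → False := by
    intro w hwT hxw haw hbw
    have hclq : G.IsClique ((insert w T : Finset V) : Set V) := by
      rw [Finset.coe_insert]
      refine hclqT.insert fun m hm hne => ?_
      rw [Finset.mem_coe, hTeq, Finset.mem_insert, Finset.mem_insert, Finset.mem_singleton] at hm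
      rcases hm with rfl | rfl | rfl
      exacts [hxw.symm, haw.symm, hbw.symm]
    have heq := hmaxT _ hclq (Finset.subset_insert _ _)
    exact hwT (heq ▸ Finset.mem_insert_self w T)
  -- the vertex c opposite x
  obtain ⟨c, hcT, hac, hbc⟩ := inner_edge hT haT hbT hab
  have hcx : c ≠ x := fun h => hcT (h ▸ hxT)
  have hcu : c ≠ u := by
    rintro rfl
    exact hquad c hcT hxu hac hbc
  have hcv : c ≠ v := by
    rintro rfl
    exact hquad c hcT hxv hac hbc
  -- p ∈ {a,b} adjacent to at most one of u, v
  have hnotboth : ∀ p, p ∈ T → p ≠ x → G.Adj p c → G.Adj p u → G.Adj p v → False := by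
    intro p hpT hpx hpc hpu hpv
    have hdeg_p := hdeg p
    have hsub5 : ({x, u, v, c} : Finset V) ⊆ G.neighborFinset p := by
      intro m hm
      rw [SimpleGraph.mem_neighborFinset]
      simp only [Finset.mem_insert, Finset.mem_singleton] at hm
      rcases hm with rfl | rfl | rfl | rfl
      · exact hclqT (Finset.mem_coe.mpr hpT) (Finset.mem_coe.mpr hxT) hpx
      exacts [hpu, hpv, hpc]
    -- p's remaining T-neighbor is a fifth neighbor
    have hpab : p = a ∨ p = b := by
      rw [hTeq, Finset.mem_insert, Finset.mem_insert, Finset.mem_singleton] at hpT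
      tauto
    obtain ⟨q, hqT, hpq, hqx⟩ : ∃ q, q ∈ T ∧ G.Adj p q ∧ q ≠ x := by
      rcases hpab with rfl | rfl
      · exact ⟨b, hbT, hadjab, hbx⟩
      · exact ⟨a, haT, hadjab.symm, hax⟩
    have hqu : q ≠ u := fun h => huT (h ▸ hqT)
    have hqv : q ≠ v := fun h => hvT (h ▸ hqT)
    have hqc : q ≠ c := fun h => hcT (h ▸ hqT)
    have hsub5' : ({q, x, u, v, c} : Finset V) ⊆ G.neighborFinset p := by
      intro m hm
      simp only [Finset.mem_insert, Finset.mem_singleton] at hm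
      rcases hm with rfl | hm
      · rw [SimpleGraph.mem_neighborFinset]; exact hpq
      · exact hsub5 (by simpa using hm)
    have h5 : ({q, x, u, v, c} : Finset V).card = 5 := by
      rw [Finset.card_insert_of_notMem (by simp [hqx, hqu, hqv, hqc]),
          Finset.card_insert_of_notMem (by simp [Ne.symm hux, Ne.symm hvx, Ne.symm hcx]),
          Finset.card_insert_of_notMem (by simp [huv, Ne.symm hcu]),
          Finset.card_insert_of_notMem (by simp [Ne.symm hcv]), Finset.card_singleton]
    have := Finset.card_le_card hsub5'
    rw [h5] at this
    unfold SimpleGraph.degree at hdeg_p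
    omega
  -- a (resp. b) adjacent to one of u, v, via the inner edges x-a and x-b
  obtain ⟨w1, hw1T, hxw1, haw1⟩ := inner_edge hT hxT haT (Ne.symm hax)
  obtain ⟨w2, hw2T, hxw2, hbw2⟩ := inner_edge hT hxT hbT (Ne.symm hbx)
  have hwmem : ∀ w, w ∉ T → G.Adj x w → w = u ∨ w = v := by
    intro w hwT hxw
    have : w ∈ G.neighborFinset x := by rw [SimpleGraph.mem_neighborFinset]; exact hxw
    rw [hNx] at this
    simp only [Finset.mem_insert, Finset.mem_singleton] at this
    rcases this with rfl | rfl | h | h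
    · exact absurd haT hwT
    · exact absurd hbT hwT
    · exact Or.inl h
    · exact Or.inr h
  have hw1uv := hwmem w1 hw1T hxw1
  have hw2uv := hwmem w2 hw2T hxw2
  -- not both a,b adjacent to same of u,v (maximality)
  have hnotu : ¬ (G.Adj a u ∧ G.Adj b u) := fun ⟨h1, h2⟩ => hquad u huT hxu h1 h2
  have hnotv : ¬ (G.Adj a v ∧ G.Adj b v) := fun ⟨h1, h2⟩ => hquad v hvT hxv h1 h2
  have hna : ¬ (G.Adj a u ∧ G.Adj a v) := fun ⟨h1, h2⟩ => hnotboth a haT hax hac h1 h2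
  have hnb : ¬ (G.Adj b u ∧ G.Adj b v) := fun ⟨h1, h2⟩ => hnotboth b hbT hbx hbc h1 h2
  rcases hw1uv with rfl | rfl
  · -- a ~ u
    have hbuadj : ¬ G.Adj b w1 := fun h => hnotu ⟨haw1, h⟩
    have hbvadj : G.Adj b v := by
      rcases hw2uv with rfl | rfl
      · exact absurd hbw2 hbuadj
      · exact hbw2
    have hnav : ¬ G.Adj a v := fun h => hna ⟨haw1, h⟩
    have hset : G.neighborFinset x = ({a, b, v, w1} : Finset V) := by
      rw [hNx, Finset.pair_comm w1 v]
    exact ⟨a, b, v, w1, hab, hav, hau, hbv, hbu, Ne.symm huv, hset,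
      hadjab, hbvadj, hadjuv.symm, haw1.symm, hnav, hbuadj⟩
  · -- a ~ v
    have hbvadj : ¬ G.Adj b w1 := fun h => hnotv ⟨haw1, h⟩
    have hbuadj : G.Adj b u := by
      rcases hw2uv with rfl | rfl
      · exact hbw2
      · exact absurd hbw2 hbvadj
    have hnau : ¬ G.Adj a u := fun h => hna ⟨h, haw1⟩
    have hset : G.neighborFinset x = ({a, b, u, w1} : Finset V) := by
      rw [hNx]
    exact ⟨a, b, u, w1, hab, hau, hav, hbu, hbv, huv, hset,
      hadjab, hbuadj, hadjuv, haw1.symm, hnau, hbvadj⟩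
end

section
/- Let G be a connected graph with maximum degree at most 4, not the octahedron. If T and T' are inner triangles of G with |T ∩ T'| = 1, then none of the three ears of the necktie Q_T (i.e., the members of Q_T other than T) is an inner triangle, and the only normal vertex of T is the vertex in T ∩ T'. -/
universe u

variable {V : Type u}

section Helpers
variable [DecidableEq V] {G : SimpleGraph V}

lemma clique3 {u v w : V} (huv : G.Adj u v) (huw : G.Adj u w) (hvw : G.Adj v w) :
    G.IsClique (({u, v, w} : Finset V) : Set V) := by
  intro p hp q hq hne
  simp only [Finset.coe_insert, Set.mem_insert_iff, Finset.coe_singleton,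
    Set.mem_singleton_iff] at hp hq
  rcases hp with rfl|rfl|rfl <;> rcases hq with rfl|rfl|rfl <;>
    first | exact absurd rfl hne | assumption | exact huv.symm | exact huw.symm | exact hvw.symm

lemma no_common {T : Finset V} (hT : MaxClique G T) {w : V} (hw : w ∉ T)
    (h : ∀ t ∈ T, G.Adj t w) : False := by
  have hcl : G.IsClique ((insert w T : Finset V) : Set V) := by
    rw [Finset.coe_insert]
    exact hT.1.insert (fun b hb _ => (h b hb).symm)
  have h2 : T = insert w T := hT.2 _ hcl (Finset.subset_insert _ _)
  exact hw (by rw [h2]; exact Finset.mem_insert_self w T)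

lemma nbr_mem_of_degree_le_four [Fintype V] [DecidableRel G.Adj]
    (hdeg : ∀ v, G.degree v ≤ 4) {x a b c d : V}
    (hab : a ≠ b) (hac : a ≠ c) (had : a ≠ d) (hbc : b ≠ c) (hbd : b ≠ d) (hcd : c ≠ d)
    (ha : G.Adj x a) (hb : G.Adj x b) (hc : G.Adj x c) (hd : G.Adj x d) :
    ∀ z, G.Adj x z → z = a ∨ z = b ∨ z = c ∨ z = d := by
  intro z hz
  by_contra h
  push_neg at h
  obtain ⟨h1, h2, h3, h4⟩ := h
  have hsub : ({z, a, b, c, d} : Finset V) ⊆ G.neighborFinset x := by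
    intro t ht
    simp only [Finset.mem_insert, Finset.mem_singleton] at ht
    rcases ht with rfl|rfl|rfl|rfl|rfl <;> rw [SimpleGraph.mem_neighborFinset] <;> assumption
  have hcard : ({z, a, b, c, d} : Finset V).card = 5 := by
    rw [Finset.card_insert_of_notMem (by simp [h1, h2, h3, h4]),
      Finset.card_insert_of_notMem (by simp [hab, hac, had]),
      Finset.card_insert_of_notMem (by simp [hbc, hbd]),
      Finset.card_insert_of_notMem (by simp [hcd]), Finset.card_singleton]
  have h5 : 5 ≤ (G.neighborFinset x).card := hcard ▸ Finset.card_le_card hsub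
  have h6 : (G.neighborFinset x).card ≤ 4 := hdeg x
  omega

lemma edge_third {T : Finset V} (hT : IsInnerTriangle G T) {u v : V}
    (hu : u ∈ T) (hv : v ∈ T) (huv : u ≠ v) :
    ∃ w, w ∉ T ∧ G.Adj u w ∧ G.Adj v w := by
  obtain ⟨T'', ⟨hcl, hcard⟩, hne, hint⟩ := hT.2.2 u hu v hv huv
  have hsubT'' : ({u, v} : Finset V) ⊆ T'' := by
    rw [← hint]; exact Finset.inter_subset_right
  have hcard2 : ({u, v} : Finset V).card = 2 := Finset.card_pair huv
  have hex : ∃ w ∈ T'', w ∉ ({u, v} : Finset V) := by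
    by_contra h
    push_neg at h
    have := Finset.card_le_card h
    omega
  obtain ⟨w, hwT'', hw⟩ := hex
  simp only [Finset.mem_insert, Finset.mem_singleton, not_or] at hw
  have huT'' : u ∈ T'' := hsubT'' (by simp)
  have hvT'' : v ∈ T'' := hsubT'' (by simp)
  refine ⟨w, ?_,
    hcl (Finset.mem_coe.2 huT'') (Finset.mem_coe.2 hwT'') (fun h => hw.1 h.symm),
    hcl (Finset.mem_coe.2 hvT'') (Finset.mem_coe.2 hwT'') (fun h => hw.2 h.symm)⟩
  intro hwT
  have hm : w ∈ T ∩ T'' := Finset.mem_inter.2 ⟨hwT, hwT''⟩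
  rw [hint] at hm
  simp only [Finset.mem_insert, Finset.mem_singleton] at hm
  tauto

lemma tri_eq {T : Finset V} (hcard : T.card = 3) {x : V} (hx : x ∈ T) :
    ∃ a b, x ≠ a ∧ x ≠ b ∧ a ≠ b ∧ T = {x, a, b} := by
  obtain ⟨u, v, w, huv, huw, hvw, rfl⟩ := Finset.card_eq_three.1 hcard
  simp only [Finset.mem_insert, Finset.mem_singleton] at hx
  rcases hx with rfl|rfl|rfl
  · exact ⟨v, w, huv, huw, hvw, rfl⟩
  · exact ⟨u, w, Ne.symm huv, hvw, huw, by ext t; simp; try tauto⟩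
  · exact ⟨u, v, Ne.symm huw, Ne.symm hvw, huv, by ext t; simp; try tauto⟩

lemma maxclique3 {u v w : V} (huv : G.Adj u v) (huw : G.Adj u w) (hvw : G.Adj v w)
    (h : ∀ z, G.Adj u z → G.Adj v z → G.Adj w z → False) :
    MaxClique G ({u, v, w} : Finset V) := by
  refine ⟨clique3 huv huw hvw, fun t hcl hsub => ?_⟩
  refine Finset.Subset.antisymm hsub (fun z hz => ?_)
  by_contra hzmem
  simp only [Finset.mem_insert, Finset.mem_singleton, not_or] at hzmem
  obtain ⟨h1, h2, h3⟩ := hzmem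
  have hu : u ∈ t := hsub (by simp)
  have hv : v ∈ t := hsub (by simp)
  have hw : w ∈ t := hsub (by simp)
  exact h z (hcl (Finset.mem_coe.2 hu) (Finset.mem_coe.2 hz) (fun e => h1 e.symm))
    (hcl (Finset.mem_coe.2 hv) (Finset.mem_coe.2 hz) (fun e => h2 e.symm))
    (hcl (Finset.mem_coe.2 hw) (Finset.mem_coe.2 hz) (fun e => h3 e.symm))

end Helpers

lemma octa_adj_s9 {p q : Fin 3 × Fin 2} (h : p.1 ≠ q.1) : octahedron.Adj p q := h

lemma octa_nadj {p q : Fin 3 × Fin 2} (h : p.1 = q.1) : ¬ octahedron.Adj p q := fun hq => hq h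

lemma oct_case {V : Type u} (G : SimpleGraph V) (hconn : G.Connected)
    (x a b c d e : V)
    (Nx : ∀ z, G.Adj x z → z = a ∨ z = b ∨ z = c ∨ z = d)
    (Na : ∀ z, G.Adj a z → z = x ∨ z = b ∨ z = c ∨ z = e)
    (Nb : ∀ z, G.Adj b z → z = x ∨ z = a ∨ z = d ∨ z = e)
    (Nc : ∀ z, G.Adj c z → z = x ∨ z = a ∨ z = d ∨ z = e)
    (Nd : ∀ z, G.Adj d z → z = x ∨ z = b ∨ z = c ∨ z = e)
    (Ne' : ∀ z, G.Adj e z → z = a ∨ z = b ∨ z = c ∨ z = d)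
    (hxa : G.Adj x a) (hxb : G.Adj x b) (hxc : G.Adj x c) (hxd : G.Adj x d)
    (hab : G.Adj a b) (hcd : G.Adj c d) (hac : G.Adj a c) (hbd : G.Adj b d)
    (hea : G.Adj e a) (heb : G.Adj e b) (hec : G.Adj e c) (hed : G.Adj e d)
    (nxe : ¬ G.Adj x e) (nad : ¬ G.Adj a d) (nbc : ¬ G.Adj b c)
    (hxe : x ≠ e) (had : a ≠ d) (hbc : b ≠ c) :
    Nonempty (G ≃g octahedron) := by
  have hxa' := hxa.ne
  have hxb' := hxb.ne
  have hxc' := hxc.ne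
  have hxd' := hxd.ne
  have hab' := hab.ne
  have hcd' := hcd.ne
  have hac' := hac.ne
  have hbd' := hbd.ne
  have hae : a ≠ e := hea.ne'
  have hbe : b ≠ e := heb.ne'
  have hce : c ≠ e := hec.ne'
  have hde : d ≠ e := hed.ne'
  -- totality
  have total : ∀ v : V, v = x ∨ v = a ∨ v = b ∨ v = c ∨ v = d ∨ v = e := by
    have key : ∀ (u v : V), G.Walk u v →
        (u = x ∨ u = a ∨ u = b ∨ u = c ∨ u = d ∨ u = e) →
        (v = x ∨ v = a ∨ v = b ∨ v = c ∨ v = d ∨ v = e) := by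
      intro u v w
      induction w with
      | nil => exact id
      | @cons u' v' w' hadj p ih =>
        intro hu
        apply ih
        rcases hu with rfl|rfl|rfl|rfl|rfl|rfl
        · rcases Nx v' hadj with h|h|h|h <;> simp [h]
        · rcases Na v' hadj with h|h|h|h <;> simp [h]
        · rcases Nb v' hadj with h|h|h|h <;> simp [h]
        · rcases Nc v' hadj with h|h|h|h <;> simp [h]
        · rcases Nd v' hadj with h|h|h|h <;> simp [h]
        · rcases Ne' v' hadj with h|h|h|h <;> simp [h]
    intro v
    obtain ⟨w⟩ := hconn.preconnected x v
    exact key x v w (Or.inl rfl)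
  classical
  let f : V → Fin 3 × Fin 2 := fun v =>
    if v = x then (0, 0) else if v = e then (0, 1) else if v = a then (1, 0)
    else if v = d then (1, 1) else if v = b then (2, 0) else (2, 1)
  let g : Fin 3 × Fin 2 → V := fun p =>
    if p = (0, 0) then x else if p = (0, 1) then e else if p = (1, 0) then a
    else if p = (1, 1) then d else if p = (2, 0) then b else c
  have hfx : f x = (0, 0) := by simp [f]
  have hfe : f e = (0, 1) := by simp [f, hxe.symm]
  have hfa : f a = (1, 0) := by simp [f, hxa'.symm, hae]
  have hfd : f d = (1, 1) := by simp [f, hxd'.symm, hde, had.symm]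
  have hfb : f b = (2, 0) := by simp [f, hxb'.symm, hbe, hab'.symm, hbd']
  have hfc : f c = (2, 1) := by simp [f, hxc'.symm, hce, hac'.symm, hcd', hbc.symm]
  have e00 : g (0,0) = x := by norm_num [g, Prod.ext_iff]
  have e01 : g (0,1) = e := by norm_num [g, Prod.ext_iff]
  have e10 : g (1,0) = a := by norm_num [g, Prod.ext_iff]
  have e11 : g (1,1) = d := by norm_num [g, Prod.ext_iff]
  have e20 : g (2,0) = b := by
    norm_num [g, Prod.ext_iff]
    rw [if_neg (by decide), if_neg (by decide)]
  have e21 : g (2,1) = c := by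
    norm_num [g, Prod.ext_iff]
    rw [if_neg (by decide), if_neg (by decide)]
  have gf : ∀ v, g (f v) = v := by
    intro v
    rcases total v with rfl|rfl|rfl|rfl|rfl|rfl <;>
      simp only [hfx, hfa, hfb, hfc, hfd, hfe, e00, e01, e10, e11, e20, e21]
  have fg : ∀ p, f (g p) = p := by
    have key : ∀ v, f (g (f v)) = f v := fun v => by rw [gf]
    intro p
    have hp : p = (0,0) ∨ p = (0,1) ∨ p = (1,0) ∨ p = (1,1) ∨ p = (2,0) ∨ p = (2,1) := by
      revert p; decide
    rcases hp with rfl|rfl|rfl|rfl|rfl|rfl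
    · rw [← hfx]; exact key x
    · rw [← hfe]; exact key e
    · rw [← hfa]; exact key a
    · rw [← hfd]; exact key d
    · rw [← hfb]; exact key b
    · rw [← hfc]; exact key c
  refine ⟨⟨⟨f, g, gf, fg⟩, ?_⟩⟩
  intro u v
  show octahedron.Adj (f u) (f v) ↔ G.Adj u v
  rcases total u with rfl|rfl|rfl|rfl|rfl|rfl <;>
    rcases total v with rfl|rfl|rfl|rfl|rfl|rfl <;>
    simp only [hfx, hfa, hfb, hfc, hfd, hfe] <;>
    first
      | exact iff_of_false (octa_nadj (by decide)) (G.loopless.irrefl _)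
      | exact iff_of_false (octa_nadj (by decide)) nxe
      | exact iff_of_false (octa_nadj (by decide)) (fun h => nxe h.symm)
      | exact iff_of_false (octa_nadj (by decide)) nad
      | exact iff_of_false (octa_nadj (by decide)) (fun h => nad h.symm)
      | exact iff_of_false (octa_nadj (by decide)) nbc
      | exact iff_of_false (octa_nadj (by decide)) (fun h => nbc h.symm)
      | exact iff_of_true (octa_adj_s9 (by decide)) hxa
      | exact iff_of_true (octa_adj_s9 (by decide)) hxa.symm
      | exact iff_of_true (octa_adj_s9 (by decide)) hxb
      | exact iff_of_true (octa_adj_s9 (by decide)) hxb.symm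
      | exact iff_of_true (octa_adj_s9 (by decide)) hxc
      | exact iff_of_true (octa_adj_s9 (by decide)) hxc.symm
      | exact iff_of_true (octa_adj_s9 (by decide)) hxd
      | exact iff_of_true (octa_adj_s9 (by decide)) hxd.symm
      | exact iff_of_true (octa_adj_s9 (by decide)) hab
      | exact iff_of_true (octa_adj_s9 (by decide)) hab.symm
      | exact iff_of_true (octa_adj_s9 (by decide)) hcd
      | exact iff_of_true (octa_adj_s9 (by decide)) hcd.symm
      | exact iff_of_true (octa_adj_s9 (by decide)) hac
      | exact iff_of_true (octa_adj_s9 (by decide)) hac.symm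
      | exact iff_of_true (octa_adj_s9 (by decide)) hbd
      | exact iff_of_true (octa_adj_s9 (by decide)) hbd.symm
      | exact iff_of_true (octa_adj_s9 (by decide)) hea
      | exact iff_of_true (octa_adj_s9 (by decide)) hea.symm
      | exact iff_of_true (octa_adj_s9 (by decide)) heb
      | exact iff_of_true (octa_adj_s9 (by decide)) heb.symm
      | exact iff_of_true (octa_adj_s9 (by decide)) hec
      | exact iff_of_true (octa_adj_s9 (by decide)) hec.symm
      | exact iff_of_true (octa_adj_s9 (by decide)) hed
      | exact iff_of_true (octa_adj_s9 (by decide)) hed.symm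

lemma core {V : Type u} [Fintype V] [DecidableEq V] (G : SimpleGraph V)
    [DecidableRel G.Adj] (hconn : G.Connected) (hdeg : ∀ v, G.degree v ≤ 4)
    (hoct : ¬ Nonempty (G ≃g octahedron))
    (T T' : Finset V) (x a b c d : V)
    (hT : IsInnerTriangle G T) (hT' : IsInnerTriangle G T')
    (hx : T ∩ T' = ({x} : Finset V))
    (hTeq : T = {x, a, b}) (hT'eq : T' = {x, c, d})
    (hca : G.Adj c a) (hdb : G.Adj d b) :
    (∀ q ∈ QT G T, q ≠ T → ¬ IsInnerTriangle G q) ∧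
    (∀ y ∈ T, (IsNormal G y ↔ y = x)) := by
  subst hTeq
  subst hT'eq
  -- memberships in T and T'
  have xT : x ∈ ({x, a, b} : Finset V) := by simp
  have aT : a ∈ ({x, a, b} : Finset V) := by simp
  have bT : b ∈ ({x, a, b} : Finset V) := by simp
  have xT' : x ∈ ({x, c, d} : Finset V) := by simp
  have cT' : c ∈ ({x, c, d} : Finset V) := by simp
  have dT' : d ∈ ({x, c, d} : Finset V) := by simp
  -- c, d are not in T; a, b not in T'
  have hcT : c ∉ ({x, a, b} : Finset V) := by
    intro hc
    have : c ∈ ({x, a, b} : Finset V) ∩ {x, c, d} := Finset.mem_inter.2 ⟨hc, cT'⟩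
    rw [hx] at this
    simp only [Finset.mem_singleton] at this
    subst this
    have := hT'.2.1
    rw [Finset.insert_idem] at this
    have h2 : ({c, d} : Finset V).card ≤ 2 :=
      le_trans (Finset.card_insert_le _ _) (by simp)
    omega
  have hdT : d ∉ ({x, a, b} : Finset V) := by
    intro hd
    have : d ∈ ({x, a, b} : Finset V) ∩ {x, c, d} := Finset.mem_inter.2 ⟨hd, dT'⟩
    rw [hx] at this
    simp only [Finset.mem_singleton] at this
    subst this
    have := hT'.2.1
    have heq : ({d, c, d} : Finset V) = {d, c} := by ext t; simp; try tauto
    rw [heq] at this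
    have h2 : ({d, c} : Finset V).card ≤ 2 :=
      le_trans (Finset.card_insert_le _ _) (by simp)
    omega
  have haT' : a ∉ ({x, c, d} : Finset V) := by
    intro ha
    have : a ∈ ({x, a, b} : Finset V) ∩ {x, c, d} := Finset.mem_inter.2 ⟨aT, ha⟩
    rw [hx] at this
    simp only [Finset.mem_singleton] at this
    subst this
    have := hT.2.1
    rw [Finset.insert_idem] at this
    have h2 : ({a, b} : Finset V).card ≤ 2 :=
      le_trans (Finset.card_insert_le _ _) (by simp)
    omega
  have hbT' : b ∉ ({x, c, d} : Finset V) := by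
    intro hb
    have : b ∈ ({x, a, b} : Finset V) ∩ {x, c, d} := Finset.mem_inter.2 ⟨bT, hb⟩
    rw [hx] at this
    simp only [Finset.mem_singleton] at this
    subst this
    have := hT.2.1
    have heq : ({b, a, b} : Finset V) = {b, a} := by ext t; simp; try tauto
    rw [heq] at this
    have h2 : ({b, a} : Finset V).card ≤ 2 :=
      le_trans (Finset.card_insert_le _ _) (by simp)
    omega
  -- distinctness
  have hxc : x ≠ c := fun h => hcT (h ▸ xT)
  have hxd : x ≠ d := fun h => hdT (h ▸ xT)
  have hac : a ≠ c := fun h => hcT (h ▸ aT)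
  have hAd : a ≠ d := fun h => hdT (h ▸ aT)
  have hBc : b ≠ c := fun h => hcT (h ▸ bT)
  have hbd : b ≠ d := fun h => hdT (h ▸ bT)
  have hxa : x ≠ a := by
    rintro rfl
    have := hT.2.1
    rw [Finset.insert_idem] at this
    have h2 : ({x, b} : Finset V).card ≤ 2 :=
      le_trans (Finset.card_insert_le _ _) (by simp)
    omega
  have hxb : x ≠ b := by
    rintro rfl
    have := hT.2.1
    have heq : ({x, a, x} : Finset V) = {x, a} := by ext t; simp; try tauto
    rw [heq] at this
    have h2 : ({x, a} : Finset V).card ≤ 2 :=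
      le_trans (Finset.card_insert_le _ _) (by simp)
    omega
  have hab : a ≠ b := by
    rintro rfl
    have := hT.2.1
    have heq : ({x, a, a} : Finset V) = {x, a} := by ext t; simp; try tauto
    rw [heq] at this
    have h2 : ({x, a} : Finset V).card ≤ 2 :=
      le_trans (Finset.card_insert_le _ _) (by simp)
    omega
  have hcd : c ≠ d := by
    rintro rfl
    have := hT'.2.1
    have heq : ({x, c, c} : Finset V) = {x, c} := by ext t; simp; try tauto
    rw [heq] at this
    have h2 : ({x, c} : Finset V).card ≤ 2 :=
      le_trans (Finset.card_insert_le _ _) (by simp)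
    omega
  -- adjacencies within T and T'
  have hclT := hT.1.1
  have hclT' := hT'.1.1
  have axa : G.Adj x a := hclT (Finset.mem_coe.2 xT) (Finset.mem_coe.2 aT) hxa
  have axb : G.Adj x b := hclT (Finset.mem_coe.2 xT) (Finset.mem_coe.2 bT) hxb
  have aab : G.Adj a b := hclT (Finset.mem_coe.2 aT) (Finset.mem_coe.2 bT) hab
  have axc : G.Adj x c := hclT' (Finset.mem_coe.2 xT') (Finset.mem_coe.2 cT') hxc
  have axd : G.Adj x d := hclT' (Finset.mem_coe.2 xT') (Finset.mem_coe.2 dT') hxd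
  have acd : G.Adj c d := hclT' (Finset.mem_coe.2 cT') (Finset.mem_coe.2 dT') hcd
  -- e and f
  obtain ⟨e, heT, hae, hbe⟩ := edge_third hT aT bT hab
  obtain ⟨f, hfT', hcf, hdf⟩ := edge_third hT' cT' dT' hcd
  have hex : e ≠ x := fun h => heT (h ▸ xT)
  have hea : e ≠ a := fun h => heT (h ▸ aT)
  have heb : e ≠ b := fun h => heT (h ▸ bT)
  have hfx : f ≠ x := fun h => hfT' (h ▸ xT')
  have hfc : f ≠ c := fun h => hfT' (h ▸ cT')
  have hfd : f ≠ d := fun h => hfT' (h ▸ dT')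
  -- key non-adjacencies
  have nbc : ¬ G.Adj b c := by
    intro h
    refine no_common hT.1 hcT (fun t ht => ?_)
    simp only [Finset.mem_insert, Finset.mem_singleton] at ht
    rcases ht with rfl|rfl|rfl
    · exact axc
    · exact hca.symm
    · exact h
  have nad : ¬ G.Adj a d := by
    intro h
    refine no_common hT.1 hdT (fun t ht => ?_)
    simp only [Finset.mem_insert, Finset.mem_singleton] at ht
    rcases ht with rfl|rfl|rfl
    · exact axd
    · exact h
    · exact hdb.symm
  have nxe : ¬ G.Adj x e := by
    intro h
    refine no_common hT.1 heT (fun t ht => ?_)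
    simp only [Finset.mem_insert, Finset.mem_singleton] at ht
    rcases ht with rfl|rfl|rfl
    · exact h
    · exact hae
    · exact hbe
  have nxf : ¬ G.Adj x f := by
    intro h
    refine no_common hT'.1 hfT' (fun t ht => ?_)
    simp only [Finset.mem_insert, Finset.mem_singleton] at ht
    rcases ht with rfl|rfl|rfl
    · exact h
    · exact hcf
    · exact hdf
  -- more distinctness
  have hec : e ≠ c := fun h => nbc (h ▸ hbe)
  have hed : e ≠ d := fun h => nad (h ▸ hae)
  have hfa : f ≠ a := fun h => nad ((h ▸ hdf) : G.Adj d a).symm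
  have hfb : f ≠ b := fun h => nbc ((h ▸ hcf) : G.Adj c b).symm
  -- neighborhood characterizations
  have Nx : ∀ z, G.Adj x z → z = a ∨ z = b ∨ z = c ∨ z = d :=
    nbr_mem_of_degree_le_four hdeg hab hac hAd hBc hbd hcd axa axb axc axd
  have Na : ∀ z, G.Adj a z → z = x ∨ z = b ∨ z = c ∨ z = e :=
    nbr_mem_of_degree_le_four hdeg hxb hxc (Ne.symm hex) hBc (Ne.symm heb)
      (Ne.symm hec) axa.symm aab hca.symm hae
  have Nb : ∀ z, G.Adj b z → z = x ∨ z = a ∨ z = d ∨ z = e :=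
    nbr_mem_of_degree_le_four hdeg hxa hxd (Ne.symm hex) hAd (Ne.symm hea)
      (Ne.symm hed) axb.symm aab.symm hdb.symm hbe
  have Nc : ∀ z, G.Adj c z → z = x ∨ z = a ∨ z = d ∨ z = f :=
    nbr_mem_of_degree_le_four hdeg hxa hxd (Ne.symm hfx) hAd (Ne.symm hfa)
      (Ne.symm hfd) axc.symm hca acd hcf
  have Nd : ∀ z, G.Adj d z → z = x ∨ z = b ∨ z = c ∨ z = f :=
    nbr_mem_of_degree_le_four hdeg hxb hxc (Ne.symm hfx) hBc (Ne.symm hfb)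
      (Ne.symm hfc) axd.symm hdb acd.symm hdf
  -- e ≠ f, via the octahedron exclusion
  have hef : e ≠ f := by
    rintro rfl
    have Ne' : ∀ z, G.Adj e z → z = a ∨ z = b ∨ z = c ∨ z = d :=
      nbr_mem_of_degree_le_four hdeg hab hac hAd hBc hbd hcd
        hae.symm hbe.symm hcf.symm hdf.symm
    exact hoct (oct_case G hconn x a b c d e Nx Na Nb Nc Nd Ne'
      axa axb axc axd aab acd hca.symm hdb.symm hae.symm hbe.symm hcf.symm hdf.symm
      nxe nad nbc (Ne.symm hex) hAd hBc)
  have nce : ¬ G.Adj c e := by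
    intro h
    rcases Nc e h with rfl|rfl|rfl|rfl
    · exact hex rfl
    · exact hea rfl
    · exact hed rfl
    · exact hef rfl
  have nde : ¬ G.Adj d e := by
    intro h
    rcases Nd e h with rfl|rfl|rfl|rfl
    · exact hex rfl
    · exact heb rfl
    · exact hec rfl
    · exact hef rfl
  -- maximal cliques
  have mT : MaxClique G ({x, a, b} : Finset V) := hT.1
  have mT2 : MaxClique G ({x, a, c} : Finset V) := by
    refine maxclique3 axa axc hca.symm (fun z h1 h2 h3 => ?_)
    rcases Nx z h1 with rfl|rfl|rfl|rfl
    · exact G.loopless.irrefl _ h2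
    · exact nbc h3.symm
    · exact G.loopless.irrefl _ h3
    · exact nad h2
  have mT3 : MaxClique G ({x, b, d} : Finset V) := by
    refine maxclique3 axb axd hdb.symm (fun z h1 h2 h3 => ?_)
    rcases Nx z h1 with rfl|rfl|rfl|rfl
    · exact nad h3.symm
    · exact G.loopless.irrefl _ h2
    · exact nbc h2
    · exact G.loopless.irrefl _ h3
  have mE : MaxClique G ({a, b, e} : Finset V) := by
    refine maxclique3 aab hae hbe (fun z h1 h2 h3 => ?_)
    rcases Na z h1 with rfl|rfl|rfl|rfl
    · exact nxe h3.symm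
    · exact G.loopless.irrefl _ h2
    · exact nce h3.symm
    · exact G.loopless.irrefl _ h3
  -- classification of maximal cliques containing a
  have ClA : ∀ q : Finset V, MaxClique G q → a ∈ q →
      q = {x, a, b} ∨ q = {x, a, c} ∨ q = {a, b, e} := by
    intro q hq haq
    have hsubN : ∀ z ∈ q, z = a ∨ z = x ∨ z = b ∨ z = c ∨ z = e := by
      intro z hz
      by_cases hza : z = a
      · exact Or.inl hza
      · exact Or.inr (Na z (hq.1 (Finset.mem_coe.2 haq) (Finset.mem_coe.2 hz)
          (fun h => hza h.symm)))
    have hAdj : ∀ u v : V, u ∈ q → v ∈ q → u ≠ v → G.Adj u v := fun u v hu hv huv =>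
      hq.1 (Finset.mem_coe.2 hu) (Finset.mem_coe.2 hv) huv
    by_cases hxq : x ∈ q
    · by_cases hbq : b ∈ q
      · left
        refine hq.2 _ hclT (fun z hz => ?_)
        rcases hsubN z hz with rfl|rfl|rfl|rfl|rfl
        · exact aT
        · exact xT
        · exact bT
        · exact absurd (hAdj b _ hbq hz hBc) nbc
        · exact absurd (hAdj x _ hxq hz (Ne.symm hex)) nxe
      · right; left
        refine hq.2 _ (clique3 axa axc hca.symm) (fun z hz => ?_)
        rcases hsubN z hz with rfl|rfl|rfl|rfl|rfl
        · simp
        · simp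
        · exact absurd hz hbq
        · simp
        · exact absurd (hAdj x _ hxq hz (Ne.symm hex)) nxe
    · by_cases hcq : c ∈ q
      · exfalso
        have hq2 : q = {x, a, c} := by
          refine hq.2 _ (clique3 axa axc hca.symm) (fun z hz => ?_)
          rcases hsubN z hz with rfl|rfl|rfl|rfl|rfl
          · simp
          · exact absurd hz hxq
          · exact absurd (hAdj _ c hz hcq hBc) nbc
          · simp
          · exact absurd (hAdj c _ hcq hz (Ne.symm hec)) nce
        rw [hq2] at hxq
        simp at hxq
      · right; right
        refine hq.2 _ (clique3 aab hae hbe) (fun z hz => ?_)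
        rcases hsubN z hz with rfl|rfl|rfl|rfl|rfl
        · simp
        · exact absurd hz hxq
        · simp
        · exact absurd hz hcq
        · simp
  -- classification of maximal cliques containing b
  have ClB : ∀ q : Finset V, MaxClique G q → b ∈ q →
      q = {x, a, b} ∨ q = {x, b, d} ∨ q = {a, b, e} := by
    intro q hq hbq
    have hsubN : ∀ z ∈ q, z = b ∨ z = x ∨ z = a ∨ z = d ∨ z = e := by
      intro z hz
      by_cases hzb : z = b
      · exact Or.inl hzb
      · exact Or.inr (Nb z (hq.1 (Finset.mem_coe.2 hbq) (Finset.mem_coe.2 hz)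
          (fun h => hzb h.symm)))
    have hAdj : ∀ u v : V, u ∈ q → v ∈ q → u ≠ v → G.Adj u v := fun u v hu hv huv =>
      hq.1 (Finset.mem_coe.2 hu) (Finset.mem_coe.2 hv) huv
    by_cases hxq : x ∈ q
    · by_cases haq : a ∈ q
      · left
        refine hq.2 _ hclT (fun z hz => ?_)
        rcases hsubN z hz with rfl|rfl|rfl|rfl|rfl
        · exact bT
        · exact xT
        · exact aT
        · exact absurd (hAdj a _ haq hz hAd) nad
        · exact absurd (hAdj x _ hxq hz (Ne.symm hex)) nxe
      · right; left
        refine hq.2 _ (clique3 axb axd hdb.symm) (fun z hz => ?_)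
        rcases hsubN z hz with rfl|rfl|rfl|rfl|rfl
        · simp
        · simp
        · exact absurd hz haq
        · simp
        · exact absurd (hAdj x _ hxq hz (Ne.symm hex)) nxe
    · by_cases hdq : d ∈ q
      · exfalso
        have hq2 : q = {x, b, d} := by
          refine hq.2 _ (clique3 axb axd hdb.symm) (fun z hz => ?_)
          rcases hsubN z hz with rfl|rfl|rfl|rfl|rfl
          · simp
          · exact absurd hz hxq
          · exact absurd (hAdj _ d hz hdq hAd) nad
          · simp
          · exact absurd (hAdj d _ hdq hz (Ne.symm hed)) nde
        rw [hq2] at hxq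
        simp at hxq
      · right; right
        refine hq.2 _ (clique3 aab hae hbe) (fun z hz => ?_)
        rcases hsubN z hz with rfl|rfl|rfl|rfl|rfl
        · simp
        · exact absurd hz hxq
        · simp
        · exact absurd hz hdq
        · simp
  constructor
  · -- Part 1: the ears of the necktie are not inner triangles
    rintro q ⟨hmq, hcard2⟩ hneT hinner
    by_cases hxq : x ∈ q
    · by_cases haq : a ∈ q
      · by_cases hbq : b ∈ q
        · -- T ⊆ q, so q = T
          apply hneT
          have hsub : ({x, a, b} : Finset V) ⊆ q := by
            intro t ht
            simp only [Finset.mem_insert, Finset.mem_singleton] at ht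
            rcases ht with rfl|rfl|rfl <;> assumption
          exact (hT.1.2 q hmq.1 hsub).symm
        · -- q = {x, a, c}
          have hq2 : q = {x, a, c} := by
            rcases ClA q hmq haq with h|h|h
            · exact absurd (h ▸ bT : b ∈ q) hbq
            · exact h
            · exact absurd (by rw [h]; simp : b ∈ q) hbq
          subst hq2
          obtain ⟨w, hwq, haw, hcw⟩ := edge_third hinner (by simp : a ∈ _)
            (by simp : c ∈ _) hac
          rcases Na w haw with rfl|rfl|rfl|rfl
          · exact hwq (by simp)
          · exact nbc hcw.symm
          · exact G.loopless.irrefl _ hcw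
          · exact nce hcw
      · -- x ∈ q, a ∉ q, so b ∈ q and q = {x, b, d}
        have hbq : b ∈ q := by
          by_contra hbq
          have hsub : q ∩ {x, a, b} ⊆ {x} := by
            intro t ht
            rw [Finset.mem_inter] at ht
            obtain ⟨htq, htT⟩ := ht
            simp only [Finset.mem_insert, Finset.mem_singleton] at htT ⊢
            rcases htT with rfl|rfl|rfl
            · rfl
            · exact absurd htq haq
            · exact absurd htq hbq
          have := Finset.card_le_card hsub
          simp only [Finset.card_singleton] at this
          omega
        have hq2 : q = {x, b, d} := by
          rcases ClB q hmq hbq with h|h|h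
          · exact absurd (h ▸ aT : a ∈ q) haq
          · exact h
          · exact absurd (by rw [h]; simp : a ∈ q) haq
        subst hq2
        obtain ⟨w, hwq, hbw, hdw⟩ := edge_third hinner (by simp : b ∈ _)
          (by simp : d ∈ _) hbd
        rcases Nb w hbw with rfl|rfl|rfl|rfl
        · exact hwq (by simp)
        · exact nad hdw.symm
        · exact G.loopless.irrefl _ hdw
        · exact nde hdw
    · -- x ∉ q : then a, b ∈ q and q = {a, b, e}
      have haq : a ∈ q := by
        by_contra haq
        have hsub : q ∩ {x, a, b} ⊆ {b} := by
          intro t ht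
          rw [Finset.mem_inter] at ht
          obtain ⟨htq, htT⟩ := ht
          simp only [Finset.mem_insert, Finset.mem_singleton] at htT ⊢
          rcases htT with rfl|rfl|rfl
          · exact absurd htq hxq
          · exact absurd htq haq
          · rfl
        have := Finset.card_le_card hsub
        simp only [Finset.card_singleton] at this
        omega
      have hq2 : q = {a, b, e} := by
        rcases ClA q hmq haq with h|h|h
        · exact absurd (h ▸ xT : x ∈ q) hxq
        · exact absurd (by rw [h]; simp : x ∈ q) hxq
        · exact h
      subst hq2
      obtain ⟨w, hwq, haw, hew⟩ := edge_third hinner (by simp : a ∈ _)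
        (by simp : e ∈ _) (Ne.symm hea)
      rcases Na w haw with rfl|rfl|rfl|rfl
      · exact nxe hew.symm
      · exact hwq (by simp)
      · exact nce hew.symm
      · exact G.loopless.irrefl _ hew
  · -- Part 2: the unique normal vertex of T is x
    intro y hy
    simp only [Finset.mem_insert, Finset.mem_singleton] at hy
    have hT'Q : MaxClique G ({x, c, d} : Finset V) := hT'.1
    have normx : IsNormal G x := by
      refine ⟨fun q hq => hq.1, fun q hq r hr => ⟨x, hq.2, hr.2⟩, ?_⟩
      intro Q' hsub hmax hpair
      have hTQ' : ({x, a, b} : Finset V) ∈ Q' := hsub ⟨mT, by simp⟩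
      have hT2Q' : ({x, a, c} : Finset V) ∈ Q' := hsub ⟨mT2, by simp⟩
      have hT3Q' : ({x, b, d} : Finset V) ∈ Q' := hsub ⟨mT3, by simp⟩
      have hT'Q' : ({x, c, d} : Finset V) ∈ Q' := hsub ⟨hT'Q, by simp⟩
      refine Set.Subset.antisymm (fun r hr => ⟨hmax r hr, ?_⟩) hsub
      by_contra hxr
      have hAdj : ∀ u v : V, u ∈ r → v ∈ r → u ≠ v → G.Adj u v := fun u v hu hv huv =>
        (hmax r hr).1 (Finset.mem_coe.2 hu) (Finset.mem_coe.2 hv) huv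
      have key : a ∈ r → b ∈ r → False := by
        intro har hbr
        obtain ⟨u, hur, huT'⟩ := hpair r hr _ hT'Q'
        simp only [Finset.mem_insert, Finset.mem_singleton] at huT'
        rcases huT' with h|h|h
        · exact hxr (h ▸ hur)
        · exact nbc (h ▸ hAdj b u hbr hur (fun hh => hBc (hh ▸ h)))
        · exact nad (h ▸ hAdj a u har hur (fun hh => hAd (hh ▸ h)))
      obtain ⟨v, hvr, hvT⟩ := hpair r hr _ hTQ'
      simp only [Finset.mem_insert, Finset.mem_singleton] at hvT
      rcases hvT with h|h|h
      · exact hxr (h ▸ hvr)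
      · -- a ∈ r
        have har : a ∈ r := h ▸ hvr
        obtain ⟨w, hwr, hwT3⟩ := hpair r hr _ hT3Q'
        simp only [Finset.mem_insert, Finset.mem_singleton] at hwT3
        rcases hwT3 with h'|h'|h'
        · exact hxr (h' ▸ hwr)
        · exact key har (h' ▸ hwr)
        · exact nad (h' ▸ hAdj a w har hwr (fun hh => hAd (hh ▸ h')))
      · -- b ∈ r
        have hbr : b ∈ r := h ▸ hvr
        obtain ⟨w, hwr, hwT2⟩ := hpair r hr _ hT2Q'
        simp only [Finset.mem_insert, Finset.mem_singleton] at hwT2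
        rcases hwT2 with h'|h'|h'
        · exact hxr (h' ▸ hwr)
        · exact key (h' ▸ hwr) hbr
        · exact nbc ((h' ▸ hAdj _ b hwr hbr (fun hh => hBc ((h'.symm.trans hh).symm))).symm)
    have nonorma : ¬ IsNormal G a := by
      intro hn
      have h3 := hn.2.2 (starOf G a ∪ {({x, b, d} : Finset V)})
        Set.subset_union_left ?_ ?_
      · have hmem0 : ({x, b, d} : Finset V) ∈ starOf G a := by
          rw [← h3]; exact Set.mem_union_right _ rfl
        have hmem := hmem0.2
        simp only [Finset.mem_insert, Finset.mem_singleton] at hmem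
        rcases hmem with h|h|h
        · exact hxa h.symm
        · exact hab h
        · exact hAd h
      · rintro q (hq | hq)
        · exact hq.1
        · simp only [Set.mem_singleton_iff] at hq
          rw [hq]; exact mT3
      · rintro q (hq | hq) r (hr | hr)
        · exact ⟨a, hq.2, hr.2⟩
        · simp only [Set.mem_singleton_iff] at hr
          subst hr
          rcases ClA q hq.1 hq.2 with h|h|h <;> subst h
          · exact ⟨x, by simp, by simp⟩
          · exact ⟨x, by simp, by simp⟩
          · exact ⟨b, by simp, by simp⟩
        · simp only [Set.mem_singleton_iff] at hq
          subst hq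
          rcases ClA r hr.1 hr.2 with h|h|h <;> subst h
          · exact ⟨x, by simp, by simp⟩
          · exact ⟨x, by simp, by simp⟩
          · exact ⟨b, by simp, by simp⟩
        · simp only [Set.mem_singleton_iff] at hq hr
          subst hq; subst hr
          exact ⟨x, by simp, by simp⟩
    have nonormb : ¬ IsNormal G b := by
      intro hn
      have h3 := hn.2.2 (starOf G b ∪ {({x, a, c} : Finset V)})
        Set.subset_union_left ?_ ?_
      · have hmem0 : ({x, a, c} : Finset V) ∈ starOf G b := by
          rw [← h3]; exact Set.mem_union_right _ rfl
        have hmem := hmem0.2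
        simp only [Finset.mem_insert, Finset.mem_singleton] at hmem
        rcases hmem with h|h|h
        · exact hxb h.symm
        · exact hab h.symm
        · exact hBc h
      · rintro q (hq | hq)
        · exact hq.1
        · simp only [Set.mem_singleton_iff] at hq
          rw [hq]; exact mT2
      · rintro q (hq | hq) r (hr | hr)
        · exact ⟨b, hq.2, hr.2⟩
        · simp only [Set.mem_singleton_iff] at hr
          subst hr
          rcases ClB q hq.1 hq.2 with h|h|h <;> subst h
          · exact ⟨x, by simp, by simp⟩
          · exact ⟨x, by simp, by simp⟩
          · exact ⟨a, by simp, by simp⟩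
        · simp only [Set.mem_singleton_iff] at hq
          subst hq
          rcases ClB r hr.1 hr.2 with h|h|h <;> subst h
          · exact ⟨x, by simp, by simp⟩
          · exact ⟨x, by simp, by simp⟩
          · exact ⟨a, by simp, by simp⟩
        · simp only [Set.mem_singleton_iff] at hq hr
          subst hq; subst hr
          exact ⟨x, by simp, by simp⟩
    rcases hy with hy|hy|hy
    · rw [hy]
      exact iff_of_true normx rfl
    · rw [hy]
      exact iff_of_false nonorma (Ne.symm hxa)
    · rw [hy]
      exact iff_of_false nonormb (Ne.symm hxb)

theorem stmt9 {V : Type u} [Fintype V] [DecidableEq V] (G : SimpleGraph V)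
    [DecidableRel G.Adj] (hconn : G.Connected) (hdeg : ∀ v, G.degree v ≤ 4)
    (hoct : ¬ Nonempty (G ≃g octahedron))
    (T T' : Finset V) (x : V)
    (hT : IsInnerTriangle G T) (hT' : IsInnerTriangle G T')
    (hx : T ∩ T' = ({x} : Finset V)) :
    (∀ q ∈ QT G T, q ≠ T → ¬ IsInnerTriangle G q) ∧
    (∀ y ∈ T, (IsNormal G y ↔ y = x)) := by
  have xTT' : x ∈ T ∩ T' := by rw [hx]; simp
  have xT : x ∈ T := (Finset.mem_inter.1 xTT').1
  have xT' : x ∈ T' := (Finset.mem_inter.1 xTT').2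
  obtain ⟨a, b, hxa, hxb, hab, hTeq⟩ := tri_eq hT.2.1 xT
  obtain ⟨c0, d0, hxc0, hxd0, hc0d0, hT'eq⟩ := tri_eq hT'.2.1 xT'
  have aT : a ∈ T := by rw [hTeq]; simp
  have bT : b ∈ T := by rw [hTeq]; simp
  have c0T' : c0 ∈ T' := by rw [hT'eq]; simp
  have d0T' : d0 ∈ T' := by rw [hT'eq]; simp
  have hc0T : c0 ∉ T := by
    intro hc
    have hm : c0 ∈ T ∩ T' := Finset.mem_inter.2 ⟨hc, c0T'⟩
    rw [hx] at hm
    exact hxc0 (Finset.mem_singleton.1 hm).symm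
  have hd0T : d0 ∉ T := by
    intro hd
    have hm : d0 ∈ T ∩ T' := Finset.mem_inter.2 ⟨hd, d0T'⟩
    rw [hx] at hm
    exact hxd0 (Finset.mem_singleton.1 hm).symm
  obtain ⟨w1, hw1T, hxw1, haw1⟩ := edge_third hT xT aT hxa
  obtain ⟨w2, hw2T, hxw2, hbw2⟩ := edge_third hT xT bT hxb
  have hw12 : w1 ≠ w2 := by
    rintro rfl
    refine no_common hT.1 hw1T (fun t ht => ?_)
    rw [hTeq] at ht
    simp only [Finset.mem_insert, Finset.mem_singleton] at ht
    rcases ht with rfl|rfl|rfl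
    · exact hxw1
    · exact haw1
    · exact hbw2
  have hac0 : a ≠ c0 := fun h => hc0T (h ▸ aT)
  have had0 : a ≠ d0 := fun h => hd0T (h ▸ aT)
  have hbc0 : b ≠ c0 := fun h => hc0T (h ▸ bT)
  have hbd0 : b ≠ d0 := fun h => hd0T (h ▸ bT)
  have axc0 : G.Adj x c0 := hT'.1.1 (Finset.mem_coe.2 xT') (Finset.mem_coe.2 c0T') hxc0
  have axd0 : G.Adj x d0 := hT'.1.1 (Finset.mem_coe.2 xT') (Finset.mem_coe.2 d0T') hxd0
  have axa : G.Adj x a := hT.1.1 (Finset.mem_coe.2 xT) (Finset.mem_coe.2 aT) hxa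
  have axb : G.Adj x b := hT.1.1 (Finset.mem_coe.2 xT) (Finset.mem_coe.2 bT) hxb
  have Nx : ∀ z, G.Adj x z → z = a ∨ z = b ∨ z = c0 ∨ z = d0 :=
    nbr_mem_of_degree_le_four hdeg hab hac0 had0 hbc0 hbd0 hc0d0 axa axb axc0 axd0
  have hw1a : w1 ≠ a := fun h => hw1T (h ▸ aT)
  have hw1b : w1 ≠ b := fun h => hw1T (h ▸ bT)
  have hw2a : w2 ≠ a := fun h => hw2T (h ▸ aT)
  have hw2b : w2 ≠ b := fun h => hw2T (h ▸ bT)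
  have hw1cd : w1 = c0 ∨ w1 = d0 := by
    rcases Nx w1 hxw1 with h|h|h|h
    · exact absurd h hw1a
    · exact absurd h hw1b
    · exact Or.inl h
    · exact Or.inr h
  have hw2cd : w2 = c0 ∨ w2 = d0 := by
    rcases Nx w2 hxw2 with h|h|h|h
    · exact absurd h hw2a
    · exact absurd h hw2b
    · exact Or.inl h
    · exact Or.inr h
  rcases hw1cd with h1|h1
  · have h2 : w2 = d0 := by
      rcases hw2cd with h2|h2
      · exact absurd (h1.trans h2.symm) hw12
      · exact h2
    exact core G hconn hdeg hoct T T' x a b c0 d0 hT hT' hx hTeq hT'eq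
      ((h1 ▸ haw1) : G.Adj a c0).symm ((h2 ▸ hbw2) : G.Adj b d0).symm
  · have h2 : w2 = c0 := by
      rcases hw2cd with h2|h2
      · exact h2
      · exact absurd (h1.trans h2.symm) hw12
    have hT'eq2 : T' = {x, d0, c0} := by
      rw [hT'eq]; ext t; simp; tauto
    exact core G hconn hdeg hoct T T' x a b d0 c0 hT hT' hx hTeq hT'eq2
      ((h1 ▸ haw1) : G.Adj a d0).symm ((h2 ▸ hbw2) : G.Adj b c0).symm
end

section
/- Let G be a connected graph with maximum degree at most 4, not the octahedron, let T be an inner triangle, and let x be a normal vertex with x ∉ T. Then x* is adjacent to Q_T in K²(G) if and only if x is adjacent to at least two vertices of T. -/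
universe u

variable {V : Type u}

lemma exists_maxClique {V : Type u} [Fintype V] [DecidableEq V] (G : SimpleGraph V)
    (s : Finset V) (hs : G.IsClique (s : Set V)) :
    ∃ q : Finset V, MaxClique G q ∧ s ⊆ q := by
  classical
  have hfin : ({t : Finset V | G.IsClique (t : Set V) ∧ s ⊆ t}).Finite :=
    Set.finite_univ.subset (Set.subset_univ _)
  have hne : ({t : Finset V | G.IsClique (t : Set V) ∧ s ⊆ t}).Nonempty :=
    ⟨s, hs, subset_rfl⟩
  obtain ⟨q, ⟨hq, hsq⟩, hmax⟩ := Set.Finite.exists_maximal hfin hne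
  refine ⟨q, ⟨hq, ?_⟩, hsq⟩
  intro t ht hqt
  exact le_antisymm hqt (hmax ⟨ht, hsq.trans hqt⟩ hqt)

theorem stmt13 {V : Type u} [Fintype V] [DecidableEq V] (G : SimpleGraph V)
    [DecidableRel G.Adj] (hconn : G.Connected) (hdeg : ∀ v, G.degree v ≤ 4)
    (hoct : ¬ Nonempty (G ≃g octahedron))
    (T : Finset V) (hT : IsInnerTriangle G T)
    (x : V) (hx : IsNormal G x) (hxT : x ∉ T) :
    Adj2 (starOf G x) (QT G T) ↔
      ∃ u ∈ T, ∃ v ∈ T, u ≠ v ∧ G.Adj x u ∧ G.Adj x v := by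
  constructor
  · rintro ⟨-, q, ⟨hq, hxq⟩, hq', hcard⟩
    obtain ⟨u, hu, v, hv, huv⟩ := Finset.one_lt_card.mp hcard
    have hu' := Finset.mem_inter.mp hu
    have hv' := Finset.mem_inter.mp hv
    refine ⟨u, hu'.2, v, hv'.2, huv, ?_, ?_⟩
    · exact hq.1 hxq hu'.1 (fun h => hxT (h ▸ hu'.2))
    · exact hq.1 hxq hv'.1 (fun h => hxT (h ▸ hv'.2))
  · rintro ⟨u, hu, v, hv, huv, hxu, hxv⟩
    have hclique : G.IsClique (({x, u, v} : Finset V) : Set V) := by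
      intro a ha b hb hab
      simp only [Finset.coe_insert, Finset.coe_singleton, Set.mem_insert_iff,
        Set.mem_singleton_iff] at ha hb
      rcases ha with rfl | rfl | rfl <;> rcases hb with rfl | rfl | rfl <;>
        first
        | exact absurd rfl hab
        | assumption
        | exact hxu.symm
        | exact hxv.symm
        | exact hT.1.1 hu hv huv
        | exact (hT.1.1 hu hv huv).symm
    obtain ⟨q, hq, hsub⟩ := exists_maxClique G _ hclique
    have hxq : x ∈ q := hsub (by simp)
    have huq : u ∈ q := hsub (by simp)
    have hvq : v ∈ q := hsub (by simp)
    constructor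
    · intro heq
      have hTQ : T ∈ QT G T := by
        refine ⟨hT.1, ?_⟩
        simp [Finset.inter_self, hT.2.1]
      rw [← heq] at hTQ
      exact hxT hTQ.2
    · refine ⟨q, ⟨hq, hxq⟩, hq, ?_⟩
      exact Finset.one_lt_card.mpr ⟨u, Finset.mem_inter.mpr ⟨huq, hu⟩,
        v, Finset.mem_inter.mpr ⟨hvq, hv⟩, huv⟩
end
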